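/- arXiv:1812.10696 — 11 statements merged into one kernel-verified Lean document; each statement's English description precedes it below -/
import Mathlib

section
/- Let A_1, ..., A_n be subsets of the reals, each of size q ≥ 2, and let B = A_1 × ... × A_n ⊆ ℝ^n. If F ⊆ B is a finite set such that the set of nonzero Euclidean distances between distinct points of F has at most s elements, then |F| ≤ 2 · |{(α_1,...,α_n) : 0 ≤ α_i ≤ q−1 for each i, and α_1 + ... + α_n ≤ s}|. -/
open Finset

lemma mon_update {n : ℕ} (β : Fin n → ℕ) (i : Fin n) (k : ℕ) (p : Fin n → ℝ) :
    ∏ j, p j ^ (Function.update β i (β i + k) j) = p i ^ k * ∏ j, p j ^ β j := by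
  have h : ∀ j, p j ^ (Function.update β i (β i + k) j)
      = Function.update (fun j => p j ^ β j) i (p i ^ (β i + k)) j := by
    intro j
    rcases eq_or_ne j i with rfl | hj
    · simp
    · simp [Function.update_of_ne hj]
  rw [Finset.prod_congr rfl (fun j _ => h j),
    Finset.prod_update_of_mem (Finset.mem_univ i),
    Finset.prod_eq_mul_prod_sdiff_singleton_of_mem (Finset.mem_univ i) (fun j => p j ^ β j),
    pow_add]
  ring

lemma sum_update {n : ℕ} (β : Fin n → ℕ) (i : Fin n) (k : ℕ) :
    ∑ j, (Function.update β i (β i + k) j) = k + ∑ j, β j := by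
  rw [Finset.sum_update_of_mem (Finset.mem_univ i),
    Finset.sum_eq_sum_sdiff_singleton_add (Finset.mem_univ i) β]
  omega

lemma pow_reduce (q : ℕ) (hq : 1 ≤ q) (A : Set ℝ) (hAfin : A.Finite) (hcard : A.ncard = q)
    (k : ℕ) :
    ∃ c : Fin q → ℝ, (∀ j : Fin q, k < (j : ℕ) → c j = 0) ∧
      ∀ t ∈ A, t ^ k = ∑ j : Fin q, c j * t ^ (j : ℕ) := by
  induction k using Nat.strong_induction_on with
  | _ k IH =>
  rcases lt_or_ge k q with hk | hk
  · refine ⟨fun j => if (j : ℕ) = k then 1 else 0, ?_, ?_⟩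
    · intro j hj
      simp only [ite_eq_right_iff]
      omega
    · intro t ht
      rw [Finset.sum_eq_single ⟨k, hk⟩]
      · simp
      · intro j _ hj
        have : (j : ℕ) ≠ k := by
          intro h; apply hj; exact Fin.ext h
        simp [this]
      · simp
  · -- k ≥ q
    set Af : Finset ℝ := hAfin.toFinset with hAf
    have hAfcard : Af.card = q := by
      rw [← Set.ncard_eq_toFinset_card A hAfin, hcard]
    set P : Polynomial ℝ := ∏ a ∈ Af, (Polynomial.X - Polynomial.C a) with hP
    have hmonic : P.Monic := Polynomial.monic_prod_of_monic _ _
      (fun a _ => Polynomial.monic_X_sub_C a)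
    have hdeg : P.natDegree = q := by
      rw [hP, Polynomial.natDegree_prod_of_monic _ _
        (fun a _ => Polynomial.monic_X_sub_C a)]
      simp [hAfcard]
    have hq' : ∀ t ∈ A, t ^ q = ∑ i ∈ Finset.range q, (-(P.coeff i)) * t ^ i := by
      intro t ht
      have hev : P.eval t = 0 := by
        rw [hP, Polynomial.eval_prod]
        exact Finset.prod_eq_zero (hAfin.mem_toFinset.2 ht) (by simp)
      have hcq : P.coeff q = 1 := by rw [← hdeg]; exact hmonic.coeff_natDegree
      have hsum := Polynomial.eval_eq_sum_range (p := P) t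
      rw [hdeg, Finset.sum_range_succ, hcq, hev] at hsum
      have e1 : ∑ i ∈ Finset.range q, -P.coeff i * t ^ i
          = -∑ i ∈ Finset.range q, P.coeff i * t ^ i := by
        rw [← Finset.sum_neg_distrib]
        exact Finset.sum_congr rfl (fun i _ => by ring)
      rw [e1]
      linarith
    -- now k ≥ q case: t^k = t^(k-q) * t^q
    have IH' : ∀ m, m < k → ∃ c : Fin q → ℝ, (∀ j : Fin q, m < (j : ℕ) → c j = 0) ∧
        ∀ t ∈ A, t ^ m = ∑ j : Fin q, c j * t ^ (j : ℕ) := IH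
    choose C hC0 hC using IH'
    have hqpos : 0 < q := hq
    have hexplt : ∀ i ∈ Finset.range q, i + (k - q) < k := by
      intro i hi; rw [Finset.mem_range] at hi; omega
    refine ⟨fun j => ∑ i ∈ (Finset.range q).attach,
      (-(P.coeff i.1)) * C (i.1 + (k - q)) (hexplt i.1 i.2) j, ?_, ?_⟩
    · intro j hj
      apply Finset.sum_eq_zero
      intro i _
      rw [hC0 _ _ j (by omega), mul_zero]
    · intro t ht
      have h3 : t ^ k = ∑ i ∈ Finset.range q, (-(P.coeff i)) * t ^ (i + (k - q)) := by
        have hsplit : t ^ k = t ^ q * t ^ (k - q) := by rw [← pow_add]; congr 1; omega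
        rw [hsplit, hq' t ht, Finset.sum_mul]
        exact Finset.sum_congr rfl (fun i _ => by rw [pow_add]; ring)
      rw [h3, ← Finset.sum_attach (Finset.range q)
        (fun i => (-(P.coeff i)) * t ^ (i + (k - q)))]
      have h4 : ∀ i ∈ (Finset.range q).attach, (-(P.coeff i.1)) * t ^ (i.1 + (k - q))
          = ∑ j : Fin q, (-(P.coeff i.1)) * C (i.1 + (k - q)) (hexplt i.1 i.2) j * t ^ (j : ℕ) := by
        intro i _
        rw [hC _ (hexplt i.1 i.2) t ht, Finset.mul_sum]
        exact Finset.sum_congr rfl (fun j _ => by ring)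
      rw [Finset.sum_congr rfl h4, Finset.sum_comm]
      exact Finset.sum_congr rfl (fun j _ => by rw [Finset.sum_mul])

lemma mon_reduce (n s q : ℕ) (hq : 1 ≤ q) (A : Fin n → Set ℝ)
    (hAfin : ∀ i, (A i).Finite) (hA : ∀ i, (A i).ncard = q)
    (γ : Fin n → ℕ) (hγ : ∑ i, γ i ≤ s) :
    ∃ c : (Fin n → Fin q) → ℝ,
      (∀ α : Fin n → Fin q, c α ≠ 0 → ∑ i, (α i : ℕ) ≤ s) ∧
      ∀ x : Fin n → ℝ, (∀ i, x i ∈ A i) →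
        ∏ i, x i ^ γ i = ∑ α : Fin n → Fin q, c α * ∏ i, x i ^ (α i : ℕ) := by
  choose d hd0 hd using fun i => pow_reduce q hq (A i) (hAfin i) (hA i) (γ i)
  refine ⟨fun α => ∏ i, d i (α i), ?_, ?_⟩
  · intro α hα
    have hle : ∀ i, (α i : ℕ) ≤ γ i := by
      intro i
      by_contra hgt
      exact hα (Finset.prod_eq_zero (Finset.mem_univ i) (hd0 i (α i) (by omega)))
    calc ∑ i, (α i : ℕ) ≤ ∑ i, γ i := Finset.sum_le_sum (fun i _ => hle i)
      _ ≤ s := hγ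
  · intro x hx
    have h1 : ∀ i, x i ^ γ i = ∑ j : Fin q, d i j * x i ^ (j : ℕ) :=
      fun i => hd i (x i) (hx i)
    rw [Finset.prod_congr rfl (fun i _ => h1 i), Finset.prod_univ_sum]
    rw [Fintype.piFinset_univ]
    exact Finset.sum_congr rfl (fun α _ => by rw [Finset.prod_mul_distrib])

lemma dist_sq (n : ℕ) (p x : EuclideanSpace ℝ (Fin n)) :
    dist p x ^ 2 = ∑ i, (p i - x i) ^ 2 := by
  rw [EuclideanSpace.dist_eq, Real.sq_sqrt]
  · exact Finset.sum_congr rfl (fun i _ => by rw [Real.dist_eq, sq_abs])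
  · exact Finset.sum_nonneg (fun i _ => sq_nonneg _)

lemma span_bound {ι : Type} [Fintype ι] [DecidableEq ι] (S : Finset (ι → ℝ))
    (h : ∀ p : ι, (Pi.single p 1 : ι → ℝ) ∈ Submodule.span ℝ (S : Set (ι → ℝ))) :
    Fintype.card ι ≤ S.card := by
  have htop : Submodule.span ℝ (S : Set (ι → ℝ)) = ⊤ := by
    rw [eq_top_iff, ← (Pi.basisFun ℝ ι).span_eq, Submodule.span_le]
    rintro _ ⟨i, rfl⟩
    rw [Pi.basisFun_apply]
    exact h i
  have h1 : Fintype.card ι = Module.finrank ℝ (ι → ℝ) := (Module.finrank_pi ℝ).symm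
  have h2 := finrank_span_finset_le_card (R := ℝ) S
  rw [Set.finrank, htop] at h2  -- maybe
  rw [h1, ← finrank_top ℝ (ι → ℝ)]
  exact h2

noncomputable section

def genSet (n k : ℕ) : Set (EuclideanSpace ℝ (Fin n) → EuclideanSpace ℝ (Fin n) → ℝ) :=
  {f | ∃ β γ : Fin n → ℕ, (∑ i, β i) + (∑ i, γ i) ≤ k ∧
    f = fun p x => (∏ i, p i ^ β i) * (∏ i, x i ^ γ i)}

lemma prod_expand (n : ℕ) (D : Finset ℝ) :
    (fun p x : EuclideanSpace ℝ (Fin n) => ∏ d ∈ D, (d ^ 2 - dist p x ^ 2)) ∈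
      Submodule.span ℝ (genSet n (2 * D.card)) := by
  induction D using Finset.induction_on with
  | empty =>
    apply Submodule.subset_span
    refine ⟨0, 0, by simp, ?_⟩
    funext p x
    simp
  | @insert a D ha hIH =>
    have hcard : 2 * (insert a D).card = 2 * D.card + 2 := by
      rw [Finset.card_insert_of_notMem ha]; ring
    rw [hcard]
    have key : ∀ (g : EuclideanSpace ℝ (Fin n) → EuclideanSpace ℝ (Fin n) → ℝ)
        (hg : g ∈ Submodule.span ℝ (genSet n (2 * D.card))),
        (fun p x => (a ^ 2 - dist p x ^ 2) * g p x) ∈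
          Submodule.span ℝ (genSet n (2 * D.card + 2)) := by
      intro g hg
      induction hg using Submodule.span_induction with
      | mem f hf =>
        obtain ⟨β, γ, hbd, rfl⟩ := hf
        set B : EuclideanSpace ℝ (Fin n) → ℝ := fun p => ∏ i, p i ^ β i with hB
        set G : EuclideanSpace ℝ (Fin n) → ℝ := fun x => ∏ i, x i ^ γ i with hG
        have hterm : ∀ i : Fin n,
            (fun p x : EuclideanSpace ℝ (Fin n) => (p i - x i) ^ 2 * (B p * G x)) ∈
              Submodule.span ℝ (genSet n (2 * D.card + 2)) := by
          intro i
          have heq2 : (fun p x : EuclideanSpace ℝ (Fin n) => (p i - x i) ^ 2 * (B p * G x))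
              = (fun p x : EuclideanSpace ℝ (Fin n) =>
                  (∏ j, p j ^ (Function.update β i (β i + 2) j)) * (∏ j, x j ^ γ j))
                + (-2 : ℝ) • (fun p x : EuclideanSpace ℝ (Fin n) =>
                  (∏ j, p j ^ (Function.update β i (β i + 1) j)) *
                  (∏ j, x j ^ (Function.update γ i (γ i + 1) j)))
                + (fun p x : EuclideanSpace ℝ (Fin n) =>
                  (∏ j, p j ^ β j) * (∏ j, x j ^ (Function.update γ i (γ i + 2) j))) := by
            funext p x
            simp only [Pi.add_apply, Pi.smul_apply, smul_eq_mul, mon_update, hB, hG]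
            ring
          rw [heq2]
          apply Submodule.add_mem
          apply Submodule.add_mem
          · exact Submodule.subset_span
              ⟨Function.update β i (β i + 2), γ, by rw [sum_update]; omega, rfl⟩
          · exact Submodule.smul_mem _ _ (Submodule.subset_span
              ⟨Function.update β i (β i + 1), Function.update γ i (γ i + 1),
                by rw [sum_update, sum_update]; omega, rfl⟩)
          · exact Submodule.subset_span
              ⟨β, Function.update γ i (γ i + 2), by rw [sum_update]; omega, rfl⟩
        have heq : (fun p x : EuclideanSpace ℝ (Fin n) =>
            (a ^ 2 - dist p x ^ 2) * ((fun p x => B p * G x) p x))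
          = (a ^ 2) • (fun p x : EuclideanSpace ℝ (Fin n) => B p * G x)
            - ∑ i : Fin n,
              (fun p x : EuclideanSpace ℝ (Fin n) => (p i - x i) ^ 2 * (B p * G x)) := by
          funext p x
          simp only [Pi.sub_apply, Pi.smul_apply, Finset.sum_apply, smul_eq_mul, dist_sq]
          rw [← Finset.sum_mul]
          ring
        rw [heq]
        apply Submodule.sub_mem
        · exact Submodule.smul_mem _ _ (Submodule.subset_span ⟨β, γ, by omega, rfl⟩)
        · exact Submodule.sum_mem _ (fun i _ => hterm i)
      | zero =>
        have : (fun p x : EuclideanSpace ℝ (Fin n) =>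
            (a ^ 2 - dist p x ^ 2) * (0 : EuclideanSpace ℝ (Fin n) → EuclideanSpace ℝ (Fin n) → ℝ) p x) = 0 := by
          funext p x; simp
        rw [this]; exact Submodule.zero_mem _
      | add f g hf hg hf' hg' =>
        have : (fun p x => (a ^ 2 - dist p x ^ 2) * (f + g) p x)
            = (fun p x => (a ^ 2 - dist p x ^ 2) * f p x)
              + (fun p x => (a ^ 2 - dist p x ^ 2) * g p x) := by
          funext p x; simp [mul_add]
        rw [this]; exact Submodule.add_mem _ hf' hg'
      | smul r f hf hf' =>
        have : (fun p x => (a ^ 2 - dist p x ^ 2) * (r • f) p x)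
            = r • (fun p x => (a ^ 2 - dist p x ^ 2) * f p x) := by
          funext p x; simp; ring
        rw [this]; exact Submodule.smul_mem _ _ hf'
    have : (fun p x : EuclideanSpace ℝ (Fin n) => ∏ d ∈ insert a D, (d ^ 2 - dist p x ^ 2))
        = (fun p x => (a ^ 2 - dist p x ^ 2) *
            (fun p x : EuclideanSpace ℝ (Fin n) => ∏ d ∈ D, (d ^ 2 - dist p x ^ 2)) p x) := by
      funext p x
      rw [Finset.prod_insert ha]
    rw [this]
    exact key _ hIH

end

lemma decomp (n s q : ℕ) (hq : 1 ≤ q) (A : Fin n → Set ℝ)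
    (hAfin : ∀ i, (A i).Finite) (hA : ∀ i, (A i).ncard = q)
    (Fs : Finset (EuclideanSpace ℝ (Fin n))) (hFB : ∀ p ∈ Fs, ∀ i, p i ∈ A i)
    (D : Finset ℝ) (hD : D.card ≤ s) :
    ∃ (a : ↥Fs → ↥(Finset.univ.filter (fun α : Fin n → Fin q => ∑ i, (α i : ℕ) ≤ s)) → ℝ)
      (b : ↥(Finset.univ.filter (fun α : Fin n → Fin q => ∑ i, (α i : ℕ) ≤ s)) → ↥Fs → ℝ),
      ∀ p x : ↥Fs,
        ∏ d ∈ D, (d ^ 2 - dist (p : EuclideanSpace ℝ (Fin n)) (x : EuclideanSpace ℝ (Fin n)) ^ 2)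
        = (∑ α : ↥(Finset.univ.filter (fun α : Fin n → Fin q => ∑ i, (α i : ℕ) ≤ s)),
            a p α * ∏ i, (x : EuclideanSpace ℝ (Fin n)) i ^ (((α : Fin n → Fin q)) i : ℕ))
          + (∑ α : ↥(Finset.univ.filter (fun α : Fin n → Fin q => ∑ i, (α i : ℕ) ≤ s)),
            (∏ i, (p : EuclideanSpace ℝ (Fin n)) i ^ (((α : Fin n → Fin q)) i : ℕ)) * b α x) := by
  classical
  set Jm := Finset.univ.filter (fun α : Fin n → Fin q => ∑ i, (α i : ℕ) ≤ s) with hJm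
  let Φl : (↥Fs → ↥Jm → ℝ) →ₗ[ℝ] (↥Fs → ↥Fs → ℝ) :=
    { toFun := fun a p x => ∑ α : ↥Jm, a p α *
        ∏ i, (x : EuclideanSpace ℝ (Fin n)) i ^ (((α : Fin n → Fin q)) i : ℕ)
      map_add' := by
        intro u v; funext p x
        simp [add_mul, Finset.sum_add_distrib]
      map_smul' := by
        intro r u; funext p x
        simp [Finset.mul_sum, mul_assoc] }
  let Φr : (↥Jm → ↥Fs → ℝ) →ₗ[ℝ] (↥Fs → ↥Fs → ℝ) :=
    { toFun := fun b p x => ∑ α : ↥Jm,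
        (∏ i, (p : EuclideanSpace ℝ (Fin n)) i ^ (((α : Fin n → Fin q)) i : ℕ)) * b α x
      map_add' := by
        intro u v; funext p x
        simp [mul_add, Finset.sum_add_distrib]
      map_smul' := by
        intro r u; funext p x
        simp [Finset.mul_sum, mul_left_comm] }
  let res : (EuclideanSpace ℝ (Fin n) → EuclideanSpace ℝ (Fin n) → ℝ) →ₗ[ℝ]
      (↥Fs → ↥Fs → ℝ) :=
    { toFun := fun f p x => f (p : EuclideanSpace ℝ (Fin n)) (x : EuclideanSpace ℝ (Fin n))
      map_add' := fun _ _ => rfl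
      map_smul' := fun _ _ => rfl }
  have hmem : (fun p x : ↥Fs => ∏ d ∈ D,
      (d ^ 2 - dist (p : EuclideanSpace ℝ (Fin n)) (x : EuclideanSpace ℝ (Fin n)) ^ 2)) ∈
      LinearMap.range Φl ⊔ LinearMap.range Φr := by
    have h3 : res (fun p x => ∏ d ∈ D, (d ^ 2 - dist p x ^ 2)) ∈
        Submodule.map res (Submodule.span ℝ (genSet n (2 * D.card))) :=
      Submodule.mem_map_of_mem (prod_expand n D)
    rw [Submodule.map_span] at h3
    refine Submodule.span_le.2 ?_ h3
    rintro _ ⟨f, ⟨β, γ, hbd, rfl⟩, rfl⟩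
    have hcase : (∑ i, γ i ≤ s) ∨ (∑ i, β i ≤ s) := by omega
    rcases hcase with hγ | hβ
    · obtain ⟨c, hc0, hc⟩ := mon_reduce n s q hq A hAfin hA γ hγ
      have hx : ∀ x : ↥Fs, (∏ i, (x : EuclideanSpace ℝ (Fin n)) i ^ γ i)
          = ∑ α : ↥Jm, c (α : Fin n → Fin q) *
            ∏ i, (x : EuclideanSpace ℝ (Fin n)) i ^ (((α : Fin n → Fin q)) i : ℕ) := by
        intro x
        rw [Finset.sum_coe_sort Jm (fun α => c α *
          ∏ i, (x : EuclideanSpace ℝ (Fin n)) i ^ ((α i : ℕ)))]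
        rw [Finset.sum_subset (Finset.subset_univ Jm) ?_]
        · exact hc (x : EuclideanSpace ℝ (Fin n)) (fun i => hFB _ x.2 i)
        · intro α _ hα
          have h1 : ¬ (∑ i, (α i : ℕ) ≤ s) := by
            rw [hJm, Finset.mem_filter] at hα
            tauto
          have h2 : c α = 0 := by
            by_contra h
            exact h1 (hc0 α h)
          rw [h2, zero_mul]
      apply Submodule.mem_sup_left
      refine ⟨fun p α => (∏ i, (p : EuclideanSpace ℝ (Fin n)) i ^ β i) * c (α : Fin n → Fin q), ?_⟩
      funext p x
      show ∑ α : ↥Jm, ((∏ i, (p : EuclideanSpace ℝ (Fin n)) i ^ β i) * c (α : Fin n → Fin q)) *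
          ∏ i, (x : EuclideanSpace ℝ (Fin n)) i ^ (((α : Fin n → Fin q)) i : ℕ)
        = (∏ i, (p : EuclideanSpace ℝ (Fin n)) i ^ β i) * ∏ i, (x : EuclideanSpace ℝ (Fin n)) i ^ γ i
      rw [hx x, Finset.mul_sum]
      exact Finset.sum_congr rfl (fun α _ => by ring)
    · obtain ⟨c, hc0, hc⟩ := mon_reduce n s q hq A hAfin hA β hβ
      have hx : ∀ x : ↥Fs, (∏ i, (x : EuclideanSpace ℝ (Fin n)) i ^ β i)
          = ∑ α : ↥Jm, c (α : Fin n → Fin q) *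
            ∏ i, (x : EuclideanSpace ℝ (Fin n)) i ^ (((α : Fin n → Fin q)) i : ℕ) := by
        intro x
        rw [Finset.sum_coe_sort Jm (fun α => c α *
          ∏ i, (x : EuclideanSpace ℝ (Fin n)) i ^ ((α i : ℕ)))]
        rw [Finset.sum_subset (Finset.subset_univ Jm) ?_]
        · exact hc (x : EuclideanSpace ℝ (Fin n)) (fun i => hFB _ x.2 i)
        · intro α _ hα
          have h1 : ¬ (∑ i, (α i : ℕ) ≤ s) := by
            rw [hJm, Finset.mem_filter] at hα
            tauto
          have h2 : c α = 0 := by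
            by_contra h
            exact h1 (hc0 α h)
          rw [h2, zero_mul]
      apply Submodule.mem_sup_right
      refine ⟨fun α x => c (α : Fin n → Fin q) *
        ∏ i, (x : EuclideanSpace ℝ (Fin n)) i ^ γ i, ?_⟩
      funext p x
      show ∑ α : ↥Jm, (∏ i, (p : EuclideanSpace ℝ (Fin n)) i ^ (((α : Fin n → Fin q)) i : ℕ)) *
          (c (α : Fin n → Fin q) * ∏ i, (x : EuclideanSpace ℝ (Fin n)) i ^ γ i)
        = (∏ i, (p : EuclideanSpace ℝ (Fin n)) i ^ β i) * ∏ i, (x : EuclideanSpace ℝ (Fin n)) i ^ γ i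
      rw [hx p, Finset.sum_mul]
      exact Finset.sum_congr rfl (fun α _ => by ring)
  obtain ⟨fl, hfl, fr, hfr, heq⟩ := Submodule.mem_sup.1 hmem
  obtain ⟨a, rfl⟩ := hfl
  obtain ⟨b, rfl⟩ := hfr
  refine ⟨a, b, fun p x => ?_⟩
  have := congrFun (congrFun heq.symm p) x
  exact this

theorem stmt_0 (n s q : ℕ) (hq : 2 ≤ q) (A : Fin n → Set ℝ)
    (hA : ∀ i, (A i).ncard = q)
    (F : Set (EuclideanSpace ℝ (Fin n))) (hF : F.Finite)
    (hFB : ∀ p ∈ F, ∀ i, p i ∈ A i)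
    (hdist : {d : ℝ | ∃ p₁ ∈ F, ∃ p₂ ∈ F, p₁ ≠ p₂ ∧ d = dist p₁ p₂}.ncard ≤ s) :
    F.ncard ≤ 2 * (Finset.univ.filter
      (fun α : Fin n → Fin q => ∑ i, (α i : ℕ) ≤ s)).card := by
  classical
  have hq1 : 1 ≤ q := by omega
  have hAfin : ∀ i, (A i).Finite := fun i =>
    Set.finite_of_ncard_ne_zero (by rw [hA i]; omega)
  set Fs : Finset (EuclideanSpace ℝ (Fin n)) := hF.toFinset with hFs
  have hFBs : ∀ p ∈ Fs, ∀ i, p i ∈ A i := fun p hp => hFB p (hF.mem_toFinset.1 hp)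
  set Dset : Set ℝ := {d : ℝ | ∃ p₁ ∈ F, ∃ p₂ ∈ F, p₁ ≠ p₂ ∧ d = dist p₁ p₂} with hDset
  have hDsub : Dset ⊆ (fun pq : _ × _ => dist pq.1 pq.2) '' (F ×ˢ F) := by
    rintro d ⟨p₁, hp₁, p₂, hp₂, hne, rfl⟩
    exact ⟨(p₁, p₂), ⟨hp₁, hp₂⟩, rfl⟩
  have hDfin : Dset.Finite := ((hF.prod hF).image _).subset hDsub
  set D : Finset ℝ := hDfin.toFinset with hD
  have hDcard : D.card ≤ s := by
    rw [← Set.ncard_eq_toFinset_card Dset hDfin]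
    exact hdist
  set Jm := Finset.univ.filter (fun α : Fin n → Fin q => ∑ i, (α i : ℕ) ≤ s) with hJm
  obtain ⟨a, b, hab⟩ := decomp n s q hq1 A hAfin hA Fs hFBs D hDcard
  set v1 : ↥Jm → (↥Fs → ℝ) := fun α x =>
    ∏ i, (x : EuclideanSpace ℝ (Fin n)) i ^ (((α : Fin n → Fin q)) i : ℕ) with hv1
  set S : Finset (↥Fs → ℝ) :=
    Finset.image v1 Finset.univ ∪ Finset.image b Finset.univ with hS
  have hScard : S.card ≤ 2 * Jm.card := by
    have h1 : (Finset.image v1 Finset.univ).card ≤ Jm.card := by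
      refine Finset.card_image_le.trans ?_
      rw [Finset.card_univ, Fintype.card_coe]
    have h2 : (Finset.image b Finset.univ).card ≤ Jm.card := by
      refine Finset.card_image_le.trans ?_
      rw [Finset.card_univ, Fintype.card_coe]
    calc S.card ≤ _ + _ := Finset.card_union_le _ _
      _ ≤ Jm.card + Jm.card := add_le_add h1 h2
      _ = 2 * Jm.card := by ring
  have hψ0 : (∏ d ∈ D, (d ^ 2 - (0 : ℝ))) ≠ 0 := by
    rw [Finset.prod_ne_zero_iff]
    intro d hd
    rw [hD, hDfin.mem_toFinset] at hd
    obtain ⟨p₁, hp₁, p₂, hp₂, hne, rfl⟩ := hd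
    rw [sub_zero]
    exact pow_ne_zero _ (dist_ne_zero.2 hne)
  have hsingle : ∀ p : ↥Fs, (Pi.single p 1 : ↥Fs → ℝ) ∈
      Submodule.span ℝ (S : Set (↥Fs → ℝ)) := by
    intro p
    have hrow : (fun x : ↥Fs => ∏ d ∈ D,
        (d ^ 2 - dist (p : EuclideanSpace ℝ (Fin n)) (x : EuclideanSpace ℝ (Fin n)) ^ 2))
        = (∑ α : ↥Jm, a p α • v1 α) + (∑ α : ↥Jm, (v1 α p) • b α) := by
      funext x
      simp only [Pi.add_apply, Finset.sum_apply, Pi.smul_apply, smul_eq_mul]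
      exact hab p x
    have hrowmem : (fun x : ↥Fs => ∏ d ∈ D,
        (d ^ 2 - dist (p : EuclideanSpace ℝ (Fin n)) (x : EuclideanSpace ℝ (Fin n)) ^ 2)) ∈
        Submodule.span ℝ (S : Set (↥Fs → ℝ)) := by
      rw [hrow]
      apply Submodule.add_mem
      · exact Submodule.sum_mem _ (fun α _ => Submodule.smul_mem _ _
          (Submodule.subset_span (by
            rw [hS]
            exact Finset.mem_coe.2 (Finset.mem_union_left _
              (Finset.mem_image_of_mem v1 (Finset.mem_univ α))))))
      · exact Submodule.sum_mem _ (fun α _ => Submodule.smul_mem _ _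
          (Submodule.subset_span (by
            rw [hS]
            exact Finset.mem_coe.2 (Finset.mem_union_right _
              (Finset.mem_image_of_mem b (Finset.mem_univ α))))))
    have hδ : (Pi.single p 1 : ↥Fs → ℝ) = (∏ d ∈ D, (d ^ 2 - (0:ℝ)))⁻¹ •
        (fun x : ↥Fs => ∏ d ∈ D,
          (d ^ 2 - dist (p : EuclideanSpace ℝ (Fin n)) (x : EuclideanSpace ℝ (Fin n)) ^ 2)) := by
      funext x
      rcases eq_or_ne x p with rfl | hxp
      · rw [Pi.single_eq_same, Pi.smul_apply, smul_eq_mul, dist_self]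
        rw [show ((0:ℝ) ^ 2) = 0 by ring]
        exact (inv_mul_cancel₀ hψ0).symm
      · have hne : (p : EuclideanSpace ℝ (Fin n)) ≠ (x : EuclideanSpace ℝ (Fin n)) :=
          fun h => hxp (Subtype.ext h.symm)
        rw [Pi.single_eq_of_ne hxp, Pi.smul_apply, smul_eq_mul]
        have hz : (∏ d ∈ D,
            (d ^ 2 - dist (p : EuclideanSpace ℝ (Fin n)) (x : EuclideanSpace ℝ (Fin n)) ^ 2)) = 0 := by
          apply Finset.prod_eq_zero
            (i := dist (p : EuclideanSpace ℝ (Fin n)) (x : EuclideanSpace ℝ (Fin n)))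
          · rw [hD, hDfin.mem_toFinset]
            exact ⟨p.1, hF.mem_toFinset.1 p.2, x.1, hF.mem_toFinset.1 x.2, hne, rfl⟩
          · ring
        rw [hz, mul_zero]
    rw [hδ]
    exact Submodule.smul_mem _ _ hrowmem
  have hcard := span_bound S hsingle
  rw [Set.ncard_eq_toFinset_card F hF]
  calc Fs.card = Fintype.card ↥Fs := (Fintype.card_coe Fs).symm
    _ ≤ S.card := hcard
    _ ≤ 2 * Jm.card := hScard
end

section
/- Suppose n ≥ 1 and d ≥ 0 are integers, P is a multilinear polynomial in n variables of total degree at most d over a field F, and S ⊆ F^n is a finite subset with |S| > 2·∑_{i=0}^{⌊d/2⌋} C(n, i). If P(a − b) = 0 for all distinct a, b ∈ S, then P(0) = 0. -/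
open Finset MvPolynomial

theorem stmt_1 {F : Type*} [Field F] (n d : ℕ) (hn : 1 ≤ n)
    (P : MvPolynomial (Fin n) F)
    (hml : ∀ σ ∈ P.support, ∀ i, σ i ≤ 1)
    (hdeg : P.totalDegree ≤ d)
    (S : Finset (Fin n → F))
    (hcard : S.card > 2 * ∑ i ∈ Finset.range (d / 2 + 1), n.choose i)
    (hvan : ∀ a ∈ S, ∀ b ∈ S, a ≠ b → MvPolynomial.eval (a - b) P = 0) :
    MvPolynomial.eval (0 : Fin n → F) P = 0 := by
  classical
  by_contra hP0
  set m2 := d / 2 with hm2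
  -- the collection of small sets
  set K : Finset (Finset (Fin n)) := (Finset.range (m2+1)).biUnion
      (fun k => Finset.powersetCard k (Finset.univ : Finset (Fin n))) with hKdef
  have hmemK : ∀ T : Finset (Fin n), T ∈ K ↔ T.card ≤ m2 := by
    intro T
    simp only [hKdef, Finset.mem_biUnion, Finset.mem_range, Finset.mem_powersetCard,
      Nat.lt_succ_iff]
    constructor
    · rintro ⟨k, hk, -, rfl⟩; exact hk
    · intro h; exact ⟨T.card, h, Finset.subset_univ T, rfl⟩
  have hKcard : K.card = ∑ i ∈ Finset.range (m2+1), n.choose i := by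
    rw [hKdef, Finset.card_biUnion]
    · exact Finset.sum_congr rfl fun k _ => by
        simp [Finset.card_powersetCard]
    · intro x _ y _ hxy
      refine Finset.disjoint_left.mpr fun T hT hT' => hxy ?_
      rw [← (Finset.mem_powersetCard.mp hT).2, ← (Finset.mem_powersetCard.mp hT').2]
  have hsupp_card : ∀ σ ∈ P.support, σ.support.card ≤ d := by
    intro σ hσ
    have h1 : (σ.sum fun _ e => e) ≤ P.totalDegree := MvPolynomial.le_totalDegree hσ
    have h2 : (σ.sum fun _ e => e) = σ.support.card := by
      rw [Finsupp.sum, Finset.card_eq_sum_ones]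
      refine Finset.sum_congr rfl fun i hi => ?_
      have h3 := hml σ hσ i
      have h4 : σ i ≠ 0 := Finsupp.mem_support_iff.mp hi
      omega
    omega
  have heval : ∀ a b : Fin n → F, eval (a - b) P =
      ∑ σ ∈ P.support, coeff σ P * ∏ i ∈ σ.support, (a i + -(b i)) := by
    intro a b
    rw [eval_eq]
    refine Finset.sum_congr rfl fun σ hσ => ?_
    congr 1
    refine Finset.prod_congr rfl fun i hi => ?_
    have h3 := hml σ hσ i
    have h4 : σ i ≠ 0 := Finsupp.mem_support_iff.mp hi
    have h5 : σ i = 1 := by omega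
    simp [h5, Pi.sub_apply, sub_eq_add_neg]
  set G : Finset (Fin n) → (Fin n → F) → F := fun T b =>
    ∑ σ ∈ P.support.filter (fun σ => T ⊆ σ.support),
      coeff σ P * ∏ i ∈ σ.support \ T, (-(b i)) with hGdef
  set H : Finset (Fin n) → (Fin n → F) → F := fun U a =>
    ∑ σ ∈ P.support,
      ∑ T ∈ (σ.support.powerset.filter (fun T => ¬ T.card ≤ m2)).filter
          (fun T => σ.support \ T = U),
        coeff σ P * ∏ i ∈ T, a i with hHdef
  have hkey : ∀ a b : Fin n → F, eval (a - b) P =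
      (∑ T ∈ K, (∏ i ∈ T, a i) * G T b) +
      (∑ U ∈ K, H U a * ∏ i ∈ U, -(b i)) := by
    intro a b
    rw [heval a b]
    have hexp : ∀ σ ∈ P.support,
        coeff σ P * ∏ i ∈ σ.support, (a i + -(b i)) =
        (∑ T ∈ σ.support.powerset.filter (fun T => T.card ≤ m2),
          coeff σ P * ((∏ i ∈ T, a i) * ∏ i ∈ σ.support \ T, -(b i)))
        + (∑ T ∈ σ.support.powerset.filter (fun T => ¬ T.card ≤ m2),
          coeff σ P * ((∏ i ∈ T, a i) * ∏ i ∈ σ.support \ T, -(b i))) := by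
      intro σ hσ
      rw [Finset.prod_add, Finset.mul_sum, Finset.sum_filter_add_sum_filter_not]
    rw [Finset.sum_congr rfl hexp, Finset.sum_add_distrib]
    congr 1
    · -- small-T part
      rw [Finset.sum_comm' (s' := fun T => P.support.filter (fun σ => T ⊆ σ.support))
        (t' := K) (fun σ T => ?_)]
      · refine Finset.sum_congr rfl fun T _ => ?_
        rw [hGdef, Finset.mul_sum]
        refine Finset.sum_congr rfl fun σ _ => by ring
      · constructor
        · rintro ⟨h1, h2⟩
          rw [Finset.mem_filter, Finset.mem_powerset] at h2
          exact ⟨Finset.mem_filter.mpr ⟨h1, h2.1⟩, (hmemK T).mpr h2.2⟩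
        · rintro ⟨h1, h2⟩
          rw [Finset.mem_filter] at h1
          exact ⟨h1.1, Finset.mem_filter.mpr ⟨Finset.mem_powerset.mpr h1.2,
            (hmemK T).mp h2⟩⟩
    · -- large-T part
      symm
      calc (∑ U ∈ K, H U a * ∏ i ∈ U, -(b i))
          = ∑ U ∈ K, ∑ σ ∈ P.support,
              ∑ T ∈ (σ.support.powerset.filter (fun T => ¬ T.card ≤ m2)).filter
                  (fun T => σ.support \ T = U),
                coeff σ P * ((∏ i ∈ T, a i) * ∏ i ∈ U, -(b i)) := by
            refine Finset.sum_congr rfl fun U _ => ?_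
            rw [hHdef, Finset.sum_mul]
            refine Finset.sum_congr rfl fun σ _ => ?_
            rw [Finset.sum_mul]
            exact Finset.sum_congr rfl fun T _ => by ring
        _ = ∑ σ ∈ P.support, ∑ U ∈ K,
              ∑ T ∈ (σ.support.powerset.filter (fun T => ¬ T.card ≤ m2)).filter
                  (fun T => σ.support \ T = U),
                coeff σ P * ((∏ i ∈ T, a i) * ∏ i ∈ U, -(b i)) := Finset.sum_comm
        _ = ∑ σ ∈ P.support,
              ∑ T ∈ σ.support.powerset.filter (fun T => ¬ T.card ≤ m2),
                coeff σ P * ((∏ i ∈ T, a i) * ∏ i ∈ σ.support \ T, -(b i)) := by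
            refine Finset.sum_congr rfl fun σ hσ => ?_
            have hmaps : ∀ T ∈ σ.support.powerset.filter (fun T => ¬ T.card ≤ m2),
                σ.support \ T ∈ K := by
              intro T hT
              rw [Finset.mem_filter, Finset.mem_powerset] at hT
              have h1 : (σ.support \ T).card = σ.support.card - T.card :=
                Finset.card_sdiff_of_subset hT.1
              have h2 : T.card ≤ σ.support.card := Finset.card_le_card hT.1
              have h3 := hsupp_card σ hσ
              have h4 := hT.2
              rw [hmemK]
              omega
            rw [← Finset.sum_fiberwise_of_maps_to hmaps
              (fun T => coeff σ P * ((∏ i ∈ T, a i) * ∏ i ∈ σ.support \ T, -(b i)))]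
            refine Finset.sum_congr rfl fun U _ => ?_
            refine Finset.sum_congr rfl fun T hT => ?_
            rw [Finset.mem_filter] at hT
            rw [hT.2]
  -- linear algebra part
  set gL : Finset (Fin n) → ((Fin n → F) → F) := fun T => fun b => G T b with hgL
  set gR : Finset (Fin n) → ((Fin n → F) → F) := fun U => fun b => ∏ i ∈ U, -(b i) with hgR
  set GG : Finset ((Fin n → F) → F) := K.image gL ∪ K.image gR with hGG
  set W : Submodule F ((Fin n → F) → F) := Submodule.span F (GG : Set ((Fin n → F) → F))
    with hW
  set v : ↥S → ((Fin n → F) → F) := fun a => fun b => eval ((a : Fin n → F) - b) P with hv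
  have hvmem : ∀ a : ↥S, v a ∈ W := by
    intro a
    have : v a = (∑ T ∈ K, (∏ i ∈ T, (a : Fin n → F) i) • gL T)
        + (∑ U ∈ K, H U (a : Fin n → F) • gR U) := by
      funext b
      simp only [Pi.add_apply, Finset.sum_apply, Pi.smul_apply, smul_eq_mul, hv, hgL, hgR]
      exact hkey (a : Fin n → F) b
    rw [this]
    refine Submodule.add_mem _ (Submodule.sum_mem _ fun T hT => ?_)
      (Submodule.sum_mem _ fun U hU => ?_)
    · exact Submodule.smul_mem _ _ (Submodule.subset_span
        (Finset.mem_coe.mpr (Finset.mem_union_left _ (Finset.mem_image_of_mem _ hT))))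
    · exact Submodule.smul_mem _ _ (Submodule.subset_span
        (Finset.mem_coe.mpr (Finset.mem_union_right _ (Finset.mem_image_of_mem _ hU))))
  have hdiag : ∀ (a b : ↥S), v a (b : Fin n → F) =
      if a = b then eval (0 : Fin n → F) P else 0 := by
    intro a b
    by_cases h : a = b
    · subst h; simp [hv]
    · have hne : (a : Fin n → F) ≠ (b : Fin n → F) := fun hc => h (Subtype.ext hc)
      simp [hv, h, hvan _ a.2 _ b.2 hne]
  have hli : LinearIndependent F v := by
    rw [Fintype.linearIndependent_iff]
    intro g hg b
    have := congrFun hg (b : Fin n → F)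
    simp only [Finset.sum_apply, Pi.smul_apply, smul_eq_mul, Pi.zero_apply,
      Finset.sum_apply'] at this
    rw [Fintype.sum_congr _ _ (fun a => by rw [hdiag a b]) ] at this
    simp only [mul_ite, mul_zero] at this
    rw [Fintype.sum_ite_eq' b (fun a => g a * eval (0 : Fin n → F) P)] at this
    exact (mul_eq_zero.mp this).resolve_right hP0
  -- restrict to W
  set v' : ↥S → ↥W := fun a => ⟨v a, hvmem a⟩ with hv'
  have hli' : LinearIndependent F v' := by
    have hcomp : v = (W.subtype) ∘ v' := rfl
    exact LinearIndependent.of_comp W.subtype (by rw [← hcomp]; exact hli)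
  have hfin : Fintype.card ↥S ≤ Module.finrank F ↥W :=
    hli'.fintype_card_le_finrank
  have hWle : Module.finrank F ↥W ≤ GG.card := finrank_span_finset_le_card GG
  have hGGle : GG.card ≤ 2 * K.card := by
    calc GG.card ≤ (K.image gL).card + (K.image gR).card := Finset.card_union_le _ _
      _ ≤ K.card + K.card := Nat.add_le_add (Finset.card_image_le) (Finset.card_image_le)
      _ = 2 * K.card := by ring
  rw [Fintype.card_coe] at hfin
  rw [hKcard] at hGGle
  omega
end

section
/- Let F be a field and let A_1, ..., A_n ⊆ F each have size t > 0. Let S ⊆ A_1 × ... × A_n be a finite subset. Suppose there is a polynomial P in 2n variables (x_1,...,x_n,y_1,...,y_n) over F such that P(a, a) ≠ 0 for every a ∈ S, and P(a, b) = 0 for all distinct a, b ∈ S. Then |S| ≤ 2 · |{(α_1,...,α_n) : 0 ≤ α_i ≤ t−1 for each i, and α_1 + ... + α_n ≤ deg(P)/2}|. -/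
open Polynomial in
private noncomputable def redC {F : Type*} [Field F] (A : Finset F) (k j : ℕ) : F :=
  ((X : F[X]) ^ k %ₘ ∏ a ∈ A, (X - C a)).coeff j

open Polynomial in
private lemma redC_natDegree_le {F : Type*} [Field F] (A : Finset F) {t : ℕ} (ht : 0 < t)
    (hA : A.card = t) (k : ℕ) :
    ((X : F[X]) ^ k %ₘ ∏ a ∈ A, (X - C a)).natDegree ≤ min k (t - 1) := by
  set m : F[X] := ∏ a ∈ A, (X - C a) with hm
  have hmon : m.Monic := monic_prod_of_monic _ _ fun a _ => monic_X_sub_C a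
  have hdeg : m.natDegree = t := by
    rw [hm, natDegree_prod _ _ fun a _ => X_sub_C_ne_zero a]
    simp [hA]
  rcases lt_or_ge k t with h | h
  · have hdlt : ((X : F[X]) ^ k).degree < m.degree := by
      rw [degree_X_pow, degree_eq_natDegree hmon.ne_zero, hdeg]
      exact_mod_cast h
    rw [(modByMonic_eq_self_iff hmon).2 hdlt, natDegree_X_pow]
    omega
  · rcases eq_or_ne ((X : F[X]) ^ k %ₘ m) 0 with h0 | h0
    · rw [h0, natDegree_zero]; omega
    · have hdlt : ((X : F[X]) ^ k %ₘ m).degree < m.degree := degree_modByMonic_lt _ hmon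
      have : ((X : F[X]) ^ k %ₘ m).natDegree < t := by
        rw [← hdeg]
        exact (natDegree_lt_natDegree_iff h0).2 hdlt
      omega

open Polynomial in
private lemma redC_vanish {F : Type*} [Field F] (A : Finset F) {t : ℕ} (ht : 0 < t)
    (hA : A.card = t) {k j : ℕ} (hj : k < j) : redC A k j = 0 := by
  apply Polynomial.coeff_eq_zero_of_natDegree_lt
  exact lt_of_le_of_lt (redC_natDegree_le A ht hA k) (lt_of_le_of_lt (min_le_left _ _) hj)

open Polynomial in
private lemma redC_eval {F : Type*} [Field F] (A : Finset F) {t : ℕ} (ht : 0 < t)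
    (hA : A.card = t) (k : ℕ) {c : F} (hc : c ∈ A) :
    c ^ k = ∑ j : Fin t, redC A k (j : ℕ) * c ^ (j : ℕ) := by
  set m : F[X] := ∏ a ∈ A, (X - C a) with hm
  have hmon : m.Monic := monic_prod_of_monic _ _ fun a _ => monic_X_sub_C a
  have hz : m.eval c = 0 := by
    rw [hm, eval_prod]
    exact Finset.prod_eq_zero hc (by simp)
  have hk : c ^ k = ((X : F[X]) ^ k %ₘ m).eval c := by
    conv_lhs => rw [show c ^ k = ((X : F[X]) ^ k).eval c by simp,
      ← modByMonic_add_div ((X : F[X]) ^ k) m]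
    simp [hz]
  have hlt : ((X : F[X]) ^ k %ₘ m).natDegree < t :=
    lt_of_le_of_lt (le_trans (redC_natDegree_le A ht hA k) (min_le_right _ _)) (by omega)
  rw [hk, eval_eq_sum_range' hlt, Fin.sum_univ_eq_sum_range (fun j => redC A k j * c ^ j)]
  rfl

private lemma grid_eval {F : Type*} [Field F] {n t : ℕ} (ht : 0 < t) (A : Fin n → Finset F)
    (hA : ∀ i, (A i).card = t) (γ : Fin n → ℕ) {b : Fin n → F} (hb : ∀ i, b i ∈ A i) :
    ∏ i, b i ^ γ i =
      ∑ α : Fin n → Fin t, (∏ i, redC (A i) (γ i) (α i : ℕ)) * ∏ i, b i ^ (α i : ℕ) := by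
  calc ∏ i, b i ^ γ i = ∏ i, ∑ j : Fin t, redC (A i) (γ i) (j : ℕ) * b i ^ (j : ℕ) :=
        Finset.prod_congr rfl fun i _ => redC_eval (A i) ht (hA i) (γ i) (hb i)
    _ = ∑ α ∈ Fintype.piFinset (fun _ : Fin n => (Finset.univ : Finset (Fin t))),
          ∏ i, (redC (A i) (γ i) (α i : ℕ) * b i ^ (α i : ℕ)) := Finset.prod_univ_sum _ _
    _ = _ := by
        rw [Fintype.piFinset_univ]
        exact Finset.sum_congr rfl fun α _ => Finset.prod_mul_distrib

private lemma grid_eval_T {F : Type*} [Field F] {n t : ℕ} (ht : 0 < t) (A : Fin n → Finset F)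
    (hA : ∀ i, (A i).card = t) {d : ℕ} (γ : Fin n → ℕ) (hγ : 2 * ∑ i, γ i ≤ d)
    {b : Fin n → F} (hb : ∀ i, b i ∈ A i) :
    ∏ i, b i ^ γ i =
      ∑ α ∈ Finset.univ.filter (fun α : Fin n → Fin t => 2 * ∑ i, (α i : ℕ) ≤ d),
        (∏ i, redC (A i) (γ i) (α i : ℕ)) * ∏ i, b i ^ (α i : ℕ) := by
  rw [grid_eval ht A hA γ hb]
  symm
  apply Finset.sum_subset (Finset.filter_subset _ _)
  intro α _ hα
  simp only [Finset.mem_filter, Finset.mem_univ, true_and, not_le] at hα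
  have hex : ∃ i, γ i < (α i : ℕ) := by
    by_contra h
    push_neg at h
    have := Finset.sum_le_sum (s := Finset.univ) fun i _ => h i
    omega
  obtain ⟨i, hi⟩ := hex
  rw [Finset.prod_eq_zero (Finset.mem_univ i) (redC_vanish (A i) ht (hA i) hi), zero_mul]

theorem stmt_2 {F : Type*} [Field F] (n t : ℕ) (ht : 0 < t)
    (A : Fin n → Finset F) (hA : ∀ i, (A i).card = t)
    (S : Finset (Fin n → F)) (hS : ∀ a ∈ S, ∀ i, a i ∈ A i)
    (P : MvPolynomial (Fin n ⊕ Fin n) F)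
    (hdiag : ∀ a ∈ S, MvPolynomial.eval (Sum.elim a a) P ≠ 0)
    (hoff : ∀ a ∈ S, ∀ b ∈ S, a ≠ b → MvPolynomial.eval (Sum.elim a b) P = 0) :
    S.card ≤ 2 * (Finset.univ.filter
      (fun α : Fin n → Fin t => 2 * ∑ i, (α i : ℕ) ≤ P.totalDegree)).card := by
  classical
  set d := P.totalDegree with hd
  set T := Finset.univ.filter (fun α : Fin n → Fin t => 2 * ∑ i, (α i : ℕ) ≤ d) with hT
  -- the matrix
  set w : ↥S → F := fun a => MvPolynomial.eval (Sum.elim (a : Fin n → F) (a : Fin n → F)) P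
    with hw
  set M : Matrix ↥S ↥S F :=
    Matrix.of (fun a b : ↥S =>
      MvPolynomial.eval (Sum.elim (a : Fin n → F) (b : Fin n → F)) P) with hM
  have hMdiag : M = Matrix.diagonal w := by
    ext a b
    rcases eq_or_ne a b with rfl | hab
    · simp [hM, hw]
    · rw [Matrix.diagonal_apply_ne _ hab]
      exact hoff a a.2 b b.2 fun h => hab (Subtype.ext h)
  have hrank : M.rank = S.card := by
    rw [hMdiag, Matrix.rank_diagonal, ← Fintype.card_coe S]
    exact Fintype.card_congr (Equiv.subtypeUnivEquiv fun a => hdiag a a.2)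
  -- expansion of entries
  have hMexp : ∀ a ∈ S, ∀ b ∈ S, MvPolynomial.eval (Sum.elim a b) P =
      ∑ m ∈ P.support, P.coeff m *
        ((∏ i, a i ^ m (Sum.inl i)) * (∏ i, b i ^ m (Sum.inr i))) := by
    intro a _ b _
    rw [MvPolynomial.eval_eq']
    refine Finset.sum_congr rfl fun m _ => ?_
    rw [Fintype.prod_sum_type]
    simp
  -- degree bound on support
  have hmsum : ∀ m ∈ P.support, (∑ i, m (Sum.inl i)) + (∑ i, m (Sum.inr i)) ≤ d := by
    intro m hm
    have h1 : m.sum (fun _ e => e) ≤ d := MvPolynomial.le_totalDegree hm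
    rw [Finsupp.sum_fintype _ _ (fun _ => rfl), Fintype.sum_sum_type] at h1
    exact h1
  -- key reduction identity
  have key : ∀ (γ : Fin n → ℕ), 2 * ∑ i, γ i ≤ d → ∀ b ∈ S,
      ∑ α : ↥T, (∏ i, redC (A i) (γ i) ((α : Fin n → Fin t) i : ℕ)) *
        ∏ i, b i ^ ((α : Fin n → Fin t) i : ℕ) = ∏ i, b i ^ γ i := by
    intro γ hγ b hb
    rw [Finset.sum_coe_sort T
      (fun α => (∏ i, redC (A i) (γ i) (α i : ℕ)) * ∏ i, b i ^ (α i : ℕ))]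
    exact (grid_eval_T ht A hA γ hγ (hS b hb)).symm
  -- the two support pieces
  set s₁ := P.support.filter (fun m => 2 * ∑ i, m (Sum.inr i) ≤ d) with hs₁
  set s₂ := P.support.filter (fun m => ¬ 2 * ∑ i, m (Sum.inr i) ≤ d) with hs₂
  -- factor matrices
  set C₁ : Matrix ↥S ↥T F := Matrix.of (fun (a : ↥S) (α : ↥T) =>
    ∑ m ∈ s₁, P.coeff m * (∏ i, (a : Fin n → F) i ^ m (Sum.inl i)) *
      (∏ i, redC (A i) (m (Sum.inr i)) ((α : Fin n → Fin t) i : ℕ))) with hC₁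
  set R₁ : Matrix ↥T ↥S F := Matrix.of (fun (α : ↥T) (b : ↥S) =>
    ∏ i, (b : Fin n → F) i ^ ((α : Fin n → Fin t) i : ℕ)) with hR₁
  set C₂ : Matrix ↥S ↥T F := Matrix.of (fun (a : ↥S) (α : ↥T) =>
    ∏ i, (a : Fin n → F) i ^ ((α : Fin n → Fin t) i : ℕ)) with hC₂
  set R₂ : Matrix ↥T ↥S F := Matrix.of (fun (α : ↥T) (b : ↥S) =>
    ∑ m ∈ s₂, P.coeff m * (∏ i, redC (A i) (m (Sum.inl i)) ((α : Fin n → Fin t) i : ℕ)) *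
      (∏ i, (b : Fin n → F) i ^ m (Sum.inr i))) with hR₂
  have hfac : M = Matrix.fromCols C₁ C₂ * Matrix.fromRows R₁ R₂ := by
    rw [Matrix.fromCols_mul_fromRows]
    ext a b
    have e1 : (C₁ * R₁) a b = ∑ m ∈ s₁, P.coeff m *
        ((∏ i, (a : Fin n → F) i ^ m (Sum.inl i)) *
         (∏ i, (b : Fin n → F) i ^ m (Sum.inr i))) := by
      rw [Matrix.mul_apply]
      simp only [hC₁, hR₁, Matrix.of_apply, Finset.sum_mul]
      rw [Finset.sum_comm]
      refine Finset.sum_congr rfl fun m hm => ?_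
      have hmd : 2 * ∑ i, m (Sum.inr i) ≤ d := (Finset.mem_filter.mp hm).2
      calc ∑ α : ↥T, P.coeff m * (∏ i, (a : Fin n → F) i ^ m (Sum.inl i)) *
              (∏ i, redC (A i) (m (Sum.inr i)) ((α : Fin n → Fin t) i : ℕ)) *
              ∏ i, (b : Fin n → F) i ^ ((α : Fin n → Fin t) i : ℕ)
          = P.coeff m * (∏ i, (a : Fin n → F) i ^ m (Sum.inl i)) *
            ∑ α : ↥T, (∏ i, redC (A i) (m (Sum.inr i)) ((α : Fin n → Fin t) i : ℕ)) *
              ∏ i, (b : Fin n → F) i ^ ((α : Fin n → Fin t) i : ℕ) := by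
            rw [Finset.mul_sum]
            exact Finset.sum_congr rfl fun α _ => by ring
        _ = _ := by
            rw [key _ hmd _ b.2, mul_assoc]
    have e2 : (C₂ * R₂) a b = ∑ m ∈ s₂, P.coeff m *
        ((∏ i, (a : Fin n → F) i ^ m (Sum.inl i)) *
         (∏ i, (b : Fin n → F) i ^ m (Sum.inr i))) := by
      rw [Matrix.mul_apply]
      simp only [hC₂, hR₂, Matrix.of_apply, Finset.mul_sum]
      rw [Finset.sum_comm]
      refine Finset.sum_congr rfl fun m hm => ?_
      have hmd : 2 * ∑ i, m (Sum.inl i) ≤ d := by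
        have h1 := hmsum m (Finset.mem_filter.mp hm).1
        have h2 := (Finset.mem_filter.mp hm).2
        omega
      calc ∑ α : ↥T, (∏ i, (a : Fin n → F) i ^ ((α : Fin n → Fin t) i : ℕ)) *
              (P.coeff m * (∏ i, redC (A i) (m (Sum.inl i)) ((α : Fin n → Fin t) i : ℕ)) *
               (∏ i, (b : Fin n → F) i ^ m (Sum.inr i)))
          = (P.coeff m * ∏ i, (b : Fin n → F) i ^ m (Sum.inr i)) *
            ∑ α : ↥T, (∏ i, redC (A i) (m (Sum.inl i)) ((α : Fin n → Fin t) i : ℕ)) *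
              ∏ i, (a : Fin n → F) i ^ ((α : Fin n → Fin t) i : ℕ) := by
            rw [Finset.mul_sum]
            exact Finset.sum_congr rfl fun α _ => by ring
        _ = _ := by
            rw [key _ hmd _ a.2]
            ring
    rw [Matrix.add_apply, e1, e2, hM, Matrix.of_apply, hMexp a a.2 b b.2, ← Finset.sum_union
      (Finset.disjoint_filter_filter_not P.support P.support _)]
    rw [Finset.filter_union_filter_not_eq]
  -- conclude
  have hle : M.rank ≤ 2 * T.card := by
    calc M.rank ≤ (Matrix.fromCols C₁ C₂).rank := by
          rw [hfac]; exact Matrix.rank_mul_le_left _ _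
      _ ≤ Fintype.card (↥T ⊕ ↥T) := Matrix.rank_le_card_width _
      _ = 2 * T.card := by
          rw [Fintype.card_sum, Fintype.card_coe]
          ring
  omega
end

section
/- Let A_1, ..., A_n be subsets of the reals, each of size q ≥ 2, and let B = A_1 × ... × A_n ⊆ ℝ^n. Suppose F ⊆ B is a finite set such that (i) for every f ∈ F, the scalar product (f, f) is not equal to (p_1, p_2) for any distinct p_1, p_2 ∈ F, and (ii) the set of scalar products {(p_1, p_2) : p_1, p_2 ∈ F, p_1 ≠ p_2} has at most s elements. Then |F| ≤ |{(α_1,...,α_n) : 0 ≤ α_i ≤ q−1 for each i, and α_1 + ... + α_n ≤ s}|. -/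
theorem stmt_3 (n s q : ℕ) (hq : 2 ≤ q) (A : Fin n → Set ℝ)
    (hA : ∀ i, (A i).ncard = q)
    (F : Set (Fin n → ℝ)) (hF : F.Finite)
    (hFB : ∀ p ∈ F, ∀ i, p i ∈ A i)
    (hself : ∀ f ∈ F, ∀ p₁ ∈ F, ∀ p₂ ∈ F, p₁ ≠ p₂ →
      (∑ i, f i * f i) ≠ ∑ i, p₁ i * p₂ i)
    (hsp : {x : ℝ | ∃ p₁ ∈ F, ∃ p₂ ∈ F, p₁ ≠ p₂ ∧ x = ∑ i, p₁ i * p₂ i}.ncard ≤ s) :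
    F.ncard ≤ (Finset.univ.filter
      (fun α : Fin n → Fin q => ∑ i, (α i : ℕ) ≤ s)).card := by
  classical
  haveI : Fintype ↥F := hF.fintype
  -- each A i is finite of card q
  have hAfin : ∀ i, (A i).Finite := by
    intro i
    refine Set.finite_of_ncard_ne_zero ?_
    rw [hA i]
    intro h
    rw [h] at hq
    exact absurd hq (by norm_num)
  have hSfin : {x : ℝ | ∃ p₁ ∈ F, ∃ p₂ ∈ F, p₁ ≠ p₂ ∧ x = ∑ i, p₁ i * p₂ i}.Finite := by
    have hsub : {x : ℝ | ∃ p₁ ∈ F, ∃ p₂ ∈ F, p₁ ≠ p₂ ∧ x = ∑ i, p₁ i * p₂ i} ⊆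
        (fun p : (Fin n → ℝ) × (Fin n → ℝ) => ∑ i, p.1 i * p.2 i) '' (F ×ˢ F) := by
      rintro x ⟨p₁, h₁, p₂, h₂, -, rfl⟩
      exact ⟨(p₁, p₂), ⟨h₁, h₂⟩, rfl⟩
    exact Set.Finite.subset ((hF.prod hF).image _) hsub
  set T : Finset ℝ := hSfin.toFinset with hT
  have hTcard : T.card ≤ s := by
    rw [hT, ← Set.ncard_eq_toFinset_card _ hSfin]
    exact hsp
  clear hsp
  have hTmem : ∀ x, x ∈ T ↔ ∃ p₁ ∈ F, ∃ p₂ ∈ F, p₁ ≠ p₂ ∧ x = ∑ i, p₁ i * p₂ i := by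
    intro x
    rw [hT, Set.Finite.mem_toFinset]
    exact Iff.rfl
  -- vanishing polynomial coefficients
  set c : Fin n → ℕ → ℝ := fun i j =>
    -(((hAfin i).toFinset.prod (fun a => Polynomial.X - Polynomial.C a)).coeff j) with hc
  have hpow : ∀ i, ∀ x ∈ A i, x ^ q = ∑ j ∈ Finset.range q, c i j * x ^ j := by
    intro i x hx
    set P : Polynomial ℝ := (hAfin i).toFinset.prod (fun a => Polynomial.X - Polynomial.C a)
      with hP
    have hmonic : P.Monic := Polynomial.monic_prod_of_monic _ _
      (fun a _ => Polynomial.monic_X_sub_C a)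
    have hdeg : P.natDegree = q := by
      rw [hP, Polynomial.natDegree_prod _ _
        (fun a _ => Polynomial.X_sub_C_ne_zero a)]
      simp only [Polynomial.natDegree_X_sub_C]
      rw [Finset.sum_const, smul_eq_mul, mul_one, ← Set.ncard_eq_toFinset_card _ (hAfin i),
        hA i]
    have heval : P.eval x = 0 := by
      rw [hP, Polynomial.eval_prod]
      refine Finset.prod_eq_zero ((hAfin i).mem_toFinset.mpr hx) ?_
      simp
    have hev := Polynomial.eval_eq_sum_range (p := P) x
    rw [heval, hdeg, Finset.sum_range_succ] at hev
    have hlead : P.coeff q = 1 := by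
      have h1 := hmonic.leadingCoeff
      rwa [Polynomial.leadingCoeff, hdeg] at h1
    rw [hlead, one_mul] at hev
    have hx9 : x ^ q = -∑ j ∈ Finset.range q, P.coeff j * x ^ j := by linarith
    rw [hx9, ← Finset.sum_neg_distrib]
    exact Finset.sum_congr rfl (fun j _ => by rw [hc]; ring)
  -- monomial functions on F
  set mon : (Fin n → ℕ) → (↥F → ℝ) := fun d x => ∏ i, (x : Fin n → ℝ) i ^ d i with hmon
  set D : Finset (Fin n → Fin q) :=
    Finset.univ.filter (fun α : Fin n → Fin q => ∑ i, (α i : ℕ) ≤ s) with hD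
  set G : Finset (↥F → ℝ) := D.image (fun α => mon (fun i => (α i : ℕ))) with hG
  set V : Submodule ℝ (↥F → ℝ) := Submodule.span ℝ (G : Set (↥F → ℝ)) with hV
  -- lemma: x i * mon d x = mon (update d i (d i + 1)) x
  have hup : ∀ (d : Fin n → ℕ) (i : Fin n) (x : ↥F),
      mon (Function.update d i (d i + 1)) x = (x : Fin n → ℝ) i * mon d x := by
    intro d i x
    simp only [hmon]
    rw [← Finset.mul_prod_erase Finset.univ _ (Finset.mem_univ i),
      ← Finset.mul_prod_erase Finset.univ (fun j => (x : Fin n → ℝ) j ^ d j)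
        (Finset.mem_univ i), Function.update_self]
    have he : ∏ j ∈ Finset.univ.erase i,
        (x : Fin n → ℝ) j ^ (Function.update d i (d i + 1) j)
        = ∏ j ∈ Finset.univ.erase i, (x : Fin n → ℝ) j ^ d j :=
      Finset.prod_congr rfl (fun j hj =>
        by rw [Function.update_of_ne (Finset.ne_of_mem_erase hj)])
    rw [he, pow_succ]
    ring
  have hsumup : ∀ (d : Fin n → ℕ) (i : Fin n) (e : ℕ),
      ∑ j, Function.update d i e j = e + ∑ j ∈ Finset.univ.erase i, d j := by
    intro d i e
    rw [Finset.sum_update_of_mem (Finset.mem_univ i)]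
    congr 1
    exact Finset.sum_congr (by simp [Finset.sdiff_singleton_eq_erase]) (fun _ _ => rfl)
  have hdsplit : ∀ (d : Fin n → ℕ) (i : Fin n),
      ∑ j, d j = d i + ∑ j ∈ Finset.univ.erase i, d j := by
    intro d i
    rw [Finset.add_sum_erase _ _ (Finset.mem_univ i)]
  -- reduction lemma: every monomial of total degree ≤ s is in V
  have key : ∀ k (d : Fin n → ℕ), ∑ i, d i = k → ∑ i, d i ≤ s → mon d ∈ V := by
    intro k
    induction k using Nat.strong_induction_on with
    | _ k ih =>
      intro d hdk hds
      by_cases hall : ∀ i, d i < q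
      · refine Submodule.subset_span ?_
        refine Finset.mem_coe.mpr (Finset.mem_image.mpr ⟨fun i => ⟨d i, hall i⟩, ?_, rfl⟩)
        rw [hD, Finset.mem_filter]
        exact ⟨Finset.mem_univ _, by simpa using hds⟩
      · push_neg at hall
        obtain ⟨i0, hi0⟩ := hall
        have hrw : mon d = ∑ j ∈ Finset.range q,
            c i0 j • mon (Function.update d i0 (d i0 - q + j)) := by
          funext x
          have hxA : (x : Fin n → ℝ) i0 ∈ A i0 := hFB _ x.2 i0
          simp only [Finset.sum_apply, Pi.smul_apply, smul_eq_mul]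
          have hupj : ∀ j, mon (Function.update d i0 (d i0 - q + j)) x
              = (x : Fin n → ℝ) i0 ^ (d i0 - q + j) *
                ∏ i ∈ Finset.univ.erase i0, (x : Fin n → ℝ) i ^ d i := by
            intro j
            simp only [hmon]
            rw [← Finset.mul_prod_erase Finset.univ _ (Finset.mem_univ i0),
              Function.update_self]
            congr 1
            exact Finset.prod_congr rfl (fun i hi =>
              by rw [Function.update_of_ne (Finset.ne_of_mem_erase hi)])
          rw [(Finset.sum_congr rfl (fun j _ => by rw [hupj j]) :
            (∑ j ∈ Finset.range q, c i0 j * mon (Function.update d i0 (d i0 - q + j)) x)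
            = ∑ j ∈ Finset.range q, c i0 j * ((x : Fin n → ℝ) i0 ^ (d i0 - q + j) *
                ∏ i ∈ Finset.univ.erase i0, (x : Fin n → ℝ) i ^ d i))]
          simp only [hmon]
          rw [← Finset.mul_prod_erase Finset.univ
            (fun i => (x : Fin n → ℝ) i ^ d i) (Finset.mem_univ i0)]
          have hsplitpow : (x : Fin n → ℝ) i0 ^ d i0
              = (x : Fin n → ℝ) i0 ^ (d i0 - q) * (x : Fin n → ℝ) i0 ^ q := by
            rw [← pow_add]
            congr 1
            omega
          rw [hsplitpow, hpow i0 _ hxA, Finset.mul_sum, Finset.sum_mul]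
          refine Finset.sum_congr rfl (fun j _ => ?_)
          rw [pow_add]
          ring
        rw [hrw]
        refine Submodule.sum_mem _ (fun j hj => Submodule.smul_mem _ _ ?_)
        have hjq : j < q := Finset.mem_range.mp hj
        refine ih (∑ i, Function.update d i0 (d i0 - q + j) i) ?_ _ rfl ?_
        · rw [hsumup]
          have := hdsplit d i0
          omega
        · rw [hsumup]
          have := hdsplit d i0
          omega
  -- intermediate spans by total degree
  set W : ℕ → Submodule ℝ (↥F → ℝ) := fun k =>
    Submodule.span ℝ {g | ∃ d : Fin n → ℕ, ∑ i, d i ≤ k ∧ g = mon d} with hW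
  have hWmono : ∀ k, W k ≤ W (k + 1) := by
    intro k
    refine Submodule.span_mono ?_
    rintro g ⟨d, hd, rfl⟩
    exact ⟨d, by omega, rfl⟩
  have hmul : ∀ (k : ℕ) (f : Fin n → ℝ) (μ : ℝ) (g : ↥F → ℝ), g ∈ W k →
      (fun x : ↥F => ((∑ i, f i * (x : Fin n → ℝ) i) - μ) * g x) ∈ W (k + 1) := by
    intro k f μ g hg
    induction hg using Submodule.span_induction with
    | mem g hgmem =>
      obtain ⟨d, hd, rfl⟩ := hgmem
      have hrw : (fun x : ↥F => ((∑ i, f i * (x : Fin n → ℝ) i) - μ) * mon d x)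
          = (∑ i, f i • mon (Function.update d i (d i + 1))) + (-μ) • mon d := by
        funext x
        simp only [Pi.add_apply, Finset.sum_apply, Pi.smul_apply, smul_eq_mul]
        rw [(Finset.sum_congr rfl (fun i _ => by rw [hup d i x]) :
          (∑ i, f i * mon (Function.update d i (d i + 1)) x)
          = ∑ i, f i * ((x : Fin n → ℝ) i * mon d x))]
        rw [sub_mul, Finset.sum_mul, sub_eq_add_neg, neg_mul]
        congr 1
        exact Finset.sum_congr rfl (fun i _ => by ring)
      rw [hrw]
      refine Submodule.add_mem _ (Submodule.sum_mem _ (fun i _ => Submodule.smul_mem _ _ ?_))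
        (Submodule.smul_mem _ _ (hWmono k (Submodule.subset_span ⟨d, hd, rfl⟩)))
      refine Submodule.subset_span ⟨Function.update d i (d i + 1), ?_, rfl⟩
      rw [hsumup]
      have := hdsplit d i
      omega
    | zero =>
      have h0 : (fun x : ↥F => ((∑ i, f i * (x : Fin n → ℝ) i) - μ) * (0 : ↥F → ℝ) x)
          = 0 := by funext x; simp
      rw [h0]; exact Submodule.zero_mem _
    | add g₁ g₂ hg₁ hg₂ ih₁ ih₂ =>
      have ha : (fun x : ↥F => ((∑ i, f i * (x : Fin n → ℝ) i) - μ) * (g₁ + g₂) x)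
          = (fun x : ↥F => ((∑ i, f i * (x : Fin n → ℝ) i) - μ) * g₁ x)
          + (fun x : ↥F => ((∑ i, f i * (x : Fin n → ℝ) i) - μ) * g₂ x) := by
        funext x; simp [mul_add]
      rw [ha]; exact Submodule.add_mem _ ih₁ ih₂
    | smul a g hg ihg =>
      have hs' : (fun x : ↥F => ((∑ i, f i * (x : Fin n → ℝ) i) - μ) * (a • g) x)
          = a • (fun x : ↥F => ((∑ i, f i * (x : Fin n → ℝ) i) - μ) * g x) := by
        funext x; simp only [Pi.smul_apply, smul_eq_mul]; ring
      rw [hs']; exact Submodule.smul_mem _ _ ihg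
  have hprod : ∀ (T' : Finset ℝ) (f : Fin n → ℝ),
      (fun x : ↥F => ∏ μ ∈ T', ((∑ i, f i * (x : Fin n → ℝ) i) - μ)) ∈ W T'.card := by
    intro T'
    induction T' using Finset.induction_on with
    | empty =>
      intro f
      have h1 : (fun x : ↥F => ∏ μ ∈ (∅ : Finset ℝ), ((∑ i, f i * (x : Fin n → ℝ) i) - μ))
          = mon (fun _ => 0) := by
        funext x; simp [hmon]
      rw [h1]
      exact Submodule.subset_span ⟨fun _ => 0, by simp, rfl⟩
    | @insert μ T' hμ ih =>
      intro f
      have h1 : (fun x : ↥F => ∏ μ' ∈ insert μ T', ((∑ i, f i * (x : Fin n → ℝ) i) - μ'))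
          = (fun x : ↥F => ((∑ i, f i * (x : Fin n → ℝ) i) - μ) *
              (fun x : ↥F => ∏ μ' ∈ T', ((∑ i, f i * (x : Fin n → ℝ) i) - μ')) x) := by
        funext x; rw [Finset.prod_insert hμ]
      rw [h1, Finset.card_insert_of_notMem hμ]
      exact hmul _ _ _ _ (ih f)
  have hWV : ∀ k, k ≤ s → W k ≤ V := by
    intro k hk
    refine Submodule.span_le.mpr ?_
    rintro g ⟨d, hd, rfl⟩
    exact key (∑ i, d i) d rfl (hd.trans hk)
  -- the functions P f
  set P : ↥F → (↥F → ℝ) := fun f x =>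
    ∏ μ ∈ T, ((∑ i, (f : Fin n → ℝ) i * (x : Fin n → ℝ) i) - μ) with hPdef
  have hPV : ∀ f, P f ∈ V := fun f => hWV T.card hTcard (hprod T (f : Fin n → ℝ))
  have hdiag : ∀ f, P f f ≠ 0 := by
    intro f
    refine Finset.prod_ne_zero_iff.mpr (fun μ hμ => ?_)
    obtain ⟨p₁, h₁, p₂, h₂, hne, rfl⟩ := (hTmem μ).mp hμ
    exact sub_ne_zero_of_ne (hself _ f.2 _ h₁ _ h₂ hne)
  have hoff : ∀ f g : ↥F, f ≠ g → P f g = 0 := by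
    intro f g hfg
    refine Finset.prod_eq_zero ((hTmem _).mpr
      ⟨(f : Fin n → ℝ), f.2, (g : Fin n → ℝ), g.2, fun h => hfg (Subtype.ext h), rfl⟩) ?_
    exact sub_self _
  have hindep : LinearIndependent ℝ P := by
    rw [Fintype.linearIndependent_iff]
    intro cc hcc g
    have h1 := congrFun hcc g
    simp only [Finset.sum_apply, Pi.smul_apply, smul_eq_mul, Pi.zero_apply] at h1
    rw [Finset.sum_eq_single g (fun f _ hf => by rw [hoff f g hf, mul_zero])
      (fun h => absurd (Finset.mem_univ g) h)] at h1
    exact (mul_eq_zero.mp h1).resolve_right (hdiag g)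
  have hindep' : LinearIndependent ℝ (fun f : ↥F => (⟨P f, hPV f⟩ : V)) := by
    refine LinearIndependent.of_comp V.subtype ?_
    exact hindep
  haveI : FiniteDimensional ℝ V := FiniteDimensional.span_of_finite ℝ G.finite_toSet
  have hcard1 : Fintype.card ↥F ≤ Module.finrank ℝ V :=
    hindep'.fintype_card_le_finrank
  have hcard2 : Module.finrank ℝ V ≤ G.card := finrank_span_finset_le_card G
  have hcard3 : G.card ≤ D.card := Finset.card_image_le
  have hF' : F.ncard = Fintype.card ↥F := by
    rw [Set.ncard_eq_toFinset_card', Set.toFinset_card]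
  rw [hF']
  calc Fintype.card ↥F ≤ Module.finrank ℝ V := hcard1
    _ ≤ G.card := hcard2
    _ ≤ D.card := hcard3
end

section
/- Let n and s be positive integers with s ≤ n, and let F ⊆ {0,1}^n ⊆ ℝ^n be the set of characteristic vectors of all s-element subsets of {1,...,n}. Then |F| = C(n, s) and the set of distances between distinct points of F has at most s elements. -/
theorem stmt_4 (n s : ℕ) (hs : 1 ≤ s) (hsn : s ≤ n)
    (F : Set (EuclideanSpace ℝ (Fin n)))
    (hF : F = {v | ∃ A : Finset (Fin n), A.card = s ∧
      v = WithLp.toLp 2 (fun i => if i ∈ A then (1 : ℝ) else 0)}) :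
    F.ncard = n.choose s ∧
    {d : ℝ | ∃ p₁ ∈ F, ∃ p₂ ∈ F, p₁ ≠ p₂ ∧ d = dist p₁ p₂}.ncard ≤ s := by
  set χ : Finset (Fin n) → EuclideanSpace ℝ (Fin n) :=
    fun A => WithLp.toLp 2 (fun i => if i ∈ A then (1 : ℝ) else 0) with hχ
  have hinj : Function.Injective χ := by
    intro A B h
    ext i
    have h2 := congrArg (fun v => v i) h
    simp only [hχ, PiLp.toLp_apply] at h2
    by_cases hA : i ∈ A <;> by_cases hB : i ∈ B <;> simp_all
  have hFim : F = χ '' {A : Finset (Fin n) | A.card = s} := by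
    rw [hF]; ext v
    constructor
    · rintro ⟨A, hA, rfl⟩; exact ⟨A, hA, rfl⟩
    · rintro ⟨A, hA, rfl⟩; exact ⟨A, hA, rfl⟩
  constructor
  · rw [hFim, Set.ncard_image_of_injective _ hinj]
    have : {A : Finset (Fin n) | A.card = s} =
        ↑((Finset.univ : Finset (Fin n)).powersetCard s) := by
      ext A; simp [Finset.mem_powersetCard_univ]
    rw [this, Set.ncard_coe_finset, Finset.card_powersetCard, Finset.card_univ,
      Fintype.card_fin]
  · have hsub : {d : ℝ | ∃ p₁ ∈ F, ∃ p₂ ∈ F, p₁ ≠ p₂ ∧ d = dist p₁ p₂} ⊆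
        (fun k : ℕ => Real.sqrt (2 * k)) '' ↑(Finset.Icc 1 s) := by
      rintro d ⟨p₁, hp₁, p₂, hp₂, hne, rfl⟩
      rw [hFim] at hp₁ hp₂
      obtain ⟨A, hA, rfl⟩ := hp₁
      obtain ⟨B, hB, rfl⟩ := hp₂
      simp only [Set.mem_setOf_eq] at hA hB
      have hAB : A ≠ B := fun h => hne (by rw [h])
      set c := (A ∩ B).card with hc
      have hcA : A ∩ B ⊆ A := Finset.inter_subset_left
      have hcle : c ≤ s := hA ▸ Finset.card_le_card hcA
      have hclt : c < s := by
        rcases lt_or_eq_of_le hcle with h | h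
        · exact h
        · exfalso
          have : A ∩ B = A := Finset.eq_of_subset_of_card_le hcA (by omega)
          have hABsub : A ⊆ B := by rw [← this]; exact Finset.inter_subset_right
          exact hAB (Finset.eq_of_subset_of_card_le hABsub (by omega))
      refine ⟨s - c, by simp [Finset.mem_Icc]; omega, ?_⟩
      have hdist : dist (χ A) (χ B) = Real.sqrt ((symmDiff A B).card : ℝ) := by
        rw [EuclideanSpace.dist_eq]
        congr 1
        have : ∀ i : Fin n, dist (χ A i) (χ B i) ^ 2 =
            if i ∈ symmDiff A B then (1 : ℝ) else 0 := by
          intro i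
          simp only [hχ, PiLp.toLp_apply, Real.dist_eq, Finset.mem_symmDiff]
          by_cases hA' : i ∈ A <;> by_cases hB' : i ∈ B <;> simp [hA', hB'] <;> norm_num
        rw [Finset.sum_congr rfl (fun i _ => this i)]
        simp
      have hsd : (symmDiff A B).card = 2 * (s - c) := by
        have h1 : symmDiff A B = SDiff.sdiff (A ∪ B) (A ∩ B) := symmDiff_eq_sup_sdiff_inf A B
        have h2 := Finset.card_union_add_card_inter A B
        rw [h1, Finset.card_sdiff_of_subset Finset.inter_subset_union]
        omega
      have hcard : ((symmDiff A B).card : ℝ) = 2 * ((s - c : ℕ) : ℝ) := by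
        rw [hsd]; push_cast [Nat.cast_sub hcle]; ring
      show Real.sqrt (2 * ((s - c : ℕ) : ℝ)) = _
      rw [hdist, hcard]
    calc {d : ℝ | ∃ p₁ ∈ F, ∃ p₂ ∈ F, p₁ ≠ p₂ ∧ d = dist p₁ p₂}.ncard
        ≤ ((fun k : ℕ => Real.sqrt (2 * k)) '' ↑(Finset.Icc 1 s)).ncard :=
          Set.ncard_le_ncard hsub ((Finset.Icc 1 s).finite_toSet.image _)
      _ ≤ (↑(Finset.Icc 1 s) : Set ℕ).ncard :=
          Set.ncard_image_le (Finset.Icc 1 s).finite_toSet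
      _ = s := by rw [Set.ncard_coe_finset, Nat.card_Icc]; omega
end

section
/- Let F be a field and let A_1, ..., A_n ⊆ F each have size t > 0. Let S ⊆ A_1 × ... × A_n be a finite subset. Suppose there is a polynomial P in 2n variables over F with P(a, a) ≠ 0 for all a ∈ S and P(a, b) = 0 for all distinct a, b ∈ S. Let d := 2n(t−1)/deg(P). Then |S| ≤ 2 · (t · J(t, d))^n, where J(t,d) := (1/t) inf_{0<x<1} ((1−x^t)/(1−x)) x^{−(t−1)/d}. -/
noncomputable def J (t : ℕ) (d : ℝ) : ℝ :=
  (1 / t) * sInf {y : ℝ | ∃ x : ℝ, 0 < x ∧ x < 1 ∧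
    y = (1 - x ^ t) / (1 - x) * x ^ (-(((t : ℝ) - 1) / d))}

open Finset

lemma geom_eq' (t : ℕ) (x : ℝ) (hx : x ≠ 1) :
    (1 - x ^ t) / (1 - x) = ∑ k ∈ Finset.range t, x ^ k := by
  rw [geom_sum_eq hx, ← neg_div_neg_eq]
  ring_nf

lemma jset_nonempty (t : ℕ) (d : ℝ) :
    {y : ℝ | ∃ x : ℝ, 0 < x ∧ x < 1 ∧
      y = (1 - x ^ t) / (1 - x) * x ^ (-(((t : ℝ) - 1) / d))}.Nonempty :=
  ⟨_, ⟨1/2, by norm_num, by norm_num, rfl⟩⟩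

lemma one_le_jset (t : ℕ) (ht : 0 < t) (d : ℝ) (hd : 0 ≤ d) :
    ∀ y ∈ {y : ℝ | ∃ x : ℝ, 0 < x ∧ x < 1 ∧
      y = (1 - x ^ t) / (1 - x) * x ^ (-(((t : ℝ) - 1) / d))}, 1 ≤ y := by
  rintro y ⟨x, hx0, hx1, rfl⟩
  have h1 : (1:ℝ) ≤ (1 - x ^ t) / (1 - x) := by
    rw [geom_eq' t x hx1.ne]
    calc (1:ℝ) = x ^ 0 := by norm_num
    _ ≤ ∑ k ∈ Finset.range t, x ^ k :=
      Finset.single_le_sum (f := fun k => x ^ k) (fun k _ => by positivity)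
        (Finset.mem_range.mpr ht)
  have h2 : (1:ℝ) ≤ x ^ (-(((t : ℝ) - 1) / d)) := by
    apply Real.one_le_rpow_of_pos_of_le_one_of_nonpos hx0 hx1.le
    have : (0:ℝ) ≤ ((t:ℝ) - 1) / d := by
      apply div_nonneg _ hd
      simp [Nat.one_le_cast.mpr ht]
    linarith
  nlinarith

lemma one_le_tJ (t : ℕ) (ht : 0 < t) (d : ℝ) (hd : 0 ≤ d) : 1 ≤ (t : ℝ) * J t d := by
  have htR : (t:ℝ) ≠ 0 := Nat.cast_ne_zero.mpr ht.ne'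
  rw [J, ← mul_assoc, mul_one_div_cancel htR, one_mul]
  exact le_csInf (jset_nonempty t d) (one_le_jset t ht d hd)
lemma reduce_mem {F : Type*} [Field F] {n t : ℕ} (ht : 0 < t)
    (A : Fin n → Finset F) (hA : ∀ i, (A i).card = t)
    (S : Finset (Fin n → F)) (hS : ∀ a ∈ S, ∀ i, a i ∈ A i) (m : ℕ) :
    ∀ N (u : Fin n → ℕ), ∑ i, u i ≤ N → ∑ i, u i ≤ m →
      (fun a : ↥S => ∏ i, (a : Fin n → F) i ^ u i) ∈
        Submodule.span F ((fun u' : Fin n → ℕ => fun a : ↥S => ∏ i, (a : Fin n → F) i ^ u' i) ''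
          {u' | (∀ i, u' i < t) ∧ ∑ i, u' i ≤ m}) := by
  classical
  intro N
  induction N using Nat.strong_induction_on with
  | _ N ih =>
    intro u hN hm
    by_cases hsmall : ∀ i, u i < t
    · exact Submodule.subset_span ⟨u, ⟨hsmall, hm⟩, rfl⟩
    push_neg at hsmall
    obtain ⟨j, hj⟩ := hsmall
    -- vanishing polynomial of A j
    set p : Polynomial F := ∏ c ∈ A j, (Polynomial.X - Polynomial.C c) with hp
    have hmonic : p.Monic := Polynomial.monic_prod_of_monic _ _
      (fun c _ => Polynomial.monic_X_sub_C c)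
    have hdegp : p.natDegree = t := by
      rw [hp, Polynomial.natDegree_prod _ _ (fun c _ => Polynomial.X_sub_C_ne_zero c)]
      simp [hA j]
    set r : Polynomial F := Polynomial.X ^ t - p with hr
    have hrdeg : r.degree < (t : ℕ) := by
      have h1 : (Polynomial.X ^ t : Polynomial F).degree = p.degree := by
        rw [Polynomial.degree_X_pow, Polynomial.degree_eq_natDegree hmonic.ne_zero, hdegp]
      have h2 := Polynomial.degree_sub_lt h1 (pow_ne_zero t Polynomial.X_ne_zero)
        (by simp [hmonic.leadingCoeff])
      rwa [← hr, Polynomial.degree_X_pow] at h2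
    have hrnat : r.natDegree < t := by
      rcases eq_or_ne r 0 with h0 | h0
      · simpa [h0] using ht
      · exact (Polynomial.natDegree_lt_iff_degree_lt h0).mpr hrdeg
    have hevalr : ∀ c ∈ A j, (c : F) ^ t = ∑ k ∈ Finset.range t, r.coeff k * c ^ k := by
      intro c hc
      have hp0 : p.eval c = 0 := by
        rw [hp, Polynomial.eval_prod]
        exact Finset.prod_eq_zero hc (by simp)
      have h1 : r.eval c = c ^ t := by simp [hr, hp0]
      rw [← h1, Polynomial.eval_eq_sum_range' hrnat]
    -- rewrite the monomial
    have hkey : (fun a : ↥S => ∏ i, (a : Fin n → F) i ^ u i)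
        = ∑ k ∈ Finset.range t,
            r.coeff k • (fun a : ↥S => ∏ i, (a : Fin n → F) i ^ (Function.update u j (u j - t + k)) i) := by
      funext a
      have haj : (a : Fin n → F) j ∈ A j := hS a a.2 j
      have hupd : ∀ w : ℕ, ∏ i, (a : Fin n → F) i ^ (Function.update u j w) i
          = (a : Fin n → F) j ^ w * ∏ i ∈ Finset.univ.erase j, (a : Fin n → F) i ^ u i := by
        intro w
        rw [← Finset.mul_prod_erase Finset.univ _ (Finset.mem_univ j)]
        rw [Function.update_self]
        congr 1
        exact Finset.prod_congr rfl fun i hi => by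
          rw [Function.update_of_ne (Finset.ne_of_mem_erase hi)]
      have hsplitj : ∏ i, (a : Fin n → F) i ^ u i
          = (a : Fin n → F) j ^ u j * ∏ i ∈ Finset.univ.erase j, (a : Fin n → F) i ^ u i := by
        rw [← Finset.mul_prod_erase Finset.univ _ (Finset.mem_univ j)]
      have hpow : (a : Fin n → F) j ^ u j
          = (∑ k ∈ Finset.range t, r.coeff k * (a : Fin n → F) j ^ k) * (a : Fin n → F) j ^ (u j - t) := by
        rw [← hevalr _ haj, ← pow_add]
        congr 1
        omega
      rw [Finset.sum_apply, hsplitj, hpow, Finset.sum_mul, Finset.sum_mul]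
      refine Finset.sum_congr rfl fun k hk => ?_
      rw [Pi.smul_apply, hupd, smul_eq_mul, pow_add]
      ring
    rw [hkey]
    refine Submodule.sum_mem _ fun k hk => Submodule.smul_mem _ _ ?_
    have hsum : ∀ w : ℕ, ∑ i, (Function.update u j w) i = w + ∑ i ∈ Finset.univ.erase j, u i := by
      intro w
      rw [← Finset.add_sum_erase Finset.univ _ (Finset.mem_univ j), Function.update_self]
      congr 1
      exact Finset.sum_congr rfl fun i hi => by
        rw [Function.update_of_ne (Finset.ne_of_mem_erase hi)]
    have hold : ∑ i, u i = u j + ∑ i ∈ Finset.univ.erase j, u i :=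
      (Finset.add_sum_erase Finset.univ _ (Finset.mem_univ j)).symm
    have hklt : k < t := Finset.mem_range.mp hk
    exact ih (∑ i, (Function.update u j (u j - t + k)) i)
      (by rw [hsum]; omega) _ le_rfl (by rw [hsum]; omega)
set_option maxHeartbeats 2000000 in
theorem stmt_9 {F : Type*} [Field F] (n t : ℕ) (ht : 0 < t)
    (A : Fin n → Finset F) (hA : ∀ i, (A i).card = t)
    (S : Finset (Fin n → F)) (hS : ∀ a ∈ S, ∀ i, a i ∈ A i)
    (P : MvPolynomial (Fin n ⊕ Fin n) F)
    (hdiag : ∀ a ∈ S, MvPolynomial.eval (Sum.elim a a) P ≠ 0)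
    (hoff : ∀ a ∈ S, ∀ b ∈ S, a ≠ b → MvPolynomial.eval (Sum.elim a b) P = 0) :
    (S.card : ℝ) ≤ 2 * ((t : ℝ) * J t (2 * n * (t - 1) / P.totalDegree)) ^ n := by
  classical
  set D := P.totalDegree with hDdef
  have hd0 : (0:ℝ) ≤ 2 * n * ((t:ℝ) - 1) / D := by
    apply div_nonneg _ (Nat.cast_nonneg D)
    have h1 : (1:ℝ) ≤ (t:ℝ) := Nat.one_le_cast.mpr ht
    have h2 : (0:ℝ) ≤ (n:ℝ) := Nat.cast_nonneg n
    nlinarith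
  have hJ1 : 1 ≤ (t : ℝ) * J t (2 * n * ((t:ℝ) - 1) / D) := one_le_tJ t ht _ hd0
  by_cases hdeg : n = 0 ∨ t = 1 ∨ D = 0
  · -- degenerate cases : S.card ≤ 1
    have hcard : S.card ≤ 1 := by
      rw [Finset.card_le_one]
      intro a ha b hb
      rcases hdeg with h | h | h
      · subst h
        funext i; exact i.elim0
      · funext i
        have h1 : (A i).card = 1 := by rw [hA i, h]
        obtain ⟨c, hc⟩ := Finset.card_eq_one.mp h1
        have := hS a ha i
        have := hS b hb i
        rw [hc] at *
        simp_all
      · by_contra hab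
        have hPC : ∀ g g' : (Fin n ⊕ Fin n) → F,
            MvPolynomial.eval g P = MvPolynomial.eval g' P := by
          intro g g'
          rw [MvPolynomial.eval_eq', MvPolynomial.eval_eq']
          refine Finset.sum_congr rfl fun s hs => ?_
          have hz := (MvPolynomial.totalDegree_eq_zero_iff _ P).mp h s hs
          simp [hz]
        have h1 := hoff a ha b hb hab
        have h2 := hdiag a ha
        rw [hPC (Sum.elim a a) (Sum.elim a b)] at h2
        exact h2 h1
    calc (S.card : ℝ) ≤ 1 := by exact_mod_cast hcard
    _ ≤ 2 * ((t : ℝ) * J t (2 * n * ((t:ℝ) - 1) / D)) ^ n := by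
        nlinarith [one_le_pow₀ (n := n) hJ1]
  push_neg at hdeg
  obtain ⟨hn0, ht1, hD0⟩ := hdeg
  have ht2 : 2 ≤ t := by omega
  -- the reduced monomial functions
  set mon : (Fin n → ℕ) → (↥S → F) :=
    fun u => fun a : ↥S => ∏ i, (a : Fin n → F) i ^ u i with hmon
  set box : Set (Fin n → ℕ) := {u | (∀ i, u i < t) ∧ ∑ i, u i ≤ D / 2} with hbox
  set W : Submodule F (↥S → F) := Submodule.span F (mon '' box) with hW
  set Efin : Finset (Fin n → Fin t) :=
    Finset.univ.filter (fun f => 2 * ∑ i, (f i : ℕ) ≤ D) with hEfin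
  set M := Efin.card with hM
  -- finrank of W is at most M
  have hboxset : box = ↑(Efin.image (fun f i => (f i : ℕ))) := by
    ext u
    simp only [hbox, Set.mem_setOf_eq, Finset.coe_image, Set.mem_image, Finset.mem_coe, hEfin,
      Finset.mem_filter, Finset.mem_univ, true_and]
    constructor
    · rintro ⟨h1, h2⟩
      refine ⟨fun i => ⟨u i, h1 i⟩, ?_, rfl⟩
      have he : ∑ i, (((fun i => (⟨u i, h1 i⟩ : Fin t)) i) : ℕ) = ∑ i, u i :=
        Finset.sum_congr rfl fun i _ => rfl
      omega
    · rintro ⟨f, hf, rfl⟩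
      refine ⟨fun i => (f i).isLt, ?_⟩
      have he : ∑ i, ((fun i => ((f i) : ℕ)) i) = ∑ i, ((f i) : ℕ) :=
        Finset.sum_congr rfl fun i _ => rfl
      omega
  have hboxim : mon '' box = ↑((Efin.image (fun f i => (f i : ℕ))).image mon) := by
    rw [hboxset]
    simp [Set.image_image]
  have hWfin : Module.finrank F W ≤ M := by
    rw [hW, hboxim]
    refine le_trans (finrank_span_finset_le_card _) ?_
    exact le_trans (Finset.card_image_le) (le_trans Finset.card_image_le le_rfl)
  -- degrees
  set dx : ((Fin n ⊕ Fin n) →₀ ℕ) → ℕ := fun s => ∑ i, s (Sum.inl i) with hdx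
  set dy : ((Fin n ⊕ Fin n) →₀ ℕ) → ℕ := fun s => ∑ i, s (Sum.inr i) with hdy
  have hsdeg : ∀ s ∈ P.support, dx s + dy s ≤ D := by
    intro s hs
    have h1 : s.sum (fun _ e => e) ≤ D := MvPolynomial.le_totalDegree hs
    have h2 : s.sum (fun _ e => e) = ∑ j, s j := Finsupp.sum_fintype _ _ (fun _ => rfl)
    rw [h2, Fintype.sum_sum_type] at h1
    exact h1
  set T1 : Finset ((Fin n ⊕ Fin n) →₀ ℕ) := P.support.filter (fun s => 2 * dx s ≤ D) with hT1
  set T2 : Finset ((Fin n ⊕ Fin n) →₀ ℕ) := P.support.filter (fun s => ¬ 2 * dx s ≤ D) with hT2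
  set B1 : Matrix ↥S ↥S F := Matrix.of fun a b =>
    ∑ s ∈ T1, P.coeff s * ((∏ i, (a : Fin n → F) i ^ s (Sum.inl i)) *
      (∏ i, (b : Fin n → F) i ^ s (Sum.inr i))) with hB1
  set B2 : Matrix ↥S ↥S F := Matrix.of fun a b =>
    ∑ s ∈ T2, P.coeff s * ((∏ i, (a : Fin n → F) i ^ s (Sum.inl i)) *
      (∏ i, (b : Fin n → F) i ^ s (Sum.inr i))) with hB2
  have hsplit : ∀ a b : ↥S, MvPolynomial.eval (Sum.elim (a : Fin n → F) (b : Fin n → F)) P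
      = B1 a b + B2 a b := by
    intro a b
    rw [MvPolynomial.eval_eq']
    rw [← Finset.sum_filter_add_sum_filter_not P.support (fun s => 2 * dx s ≤ D)]
    congr 1 <;> exact Finset.sum_congr rfl fun s hs => by
      rw [Fintype.prod_sum_type]; simp [mul_assoc]
  set U1 : Submodule F (↥S → F) := Submodule.span F (Set.range B1) with hU1
  set U2 : Submodule F (↥S → F) := Submodule.span F (Set.range B2) with hU2
  -- U2 ≤ W
  have hU2W : U2 ≤ W := by
    rw [hU2, Submodule.span_le]
    rintro _ ⟨a, rfl⟩
    have hrow : B2 a = ∑ s ∈ T2,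
        (P.coeff s * ∏ i, (a : Fin n → F) i ^ s (Sum.inl i)) • mon (fun i => s (Sum.inr i)) := by
      funext b
      rw [Finset.sum_apply]
      exact Finset.sum_congr rfl fun s hs => by
        simp only [Pi.smul_apply, smul_eq_mul, hmon, hB2]; ring
    rw [hrow]
    refine Submodule.sum_mem _ fun s hs => Submodule.smul_mem _ _ ?_
    have hmem : s ∈ P.support ∧ ¬ 2 * dx s ≤ D := by
      simpa [hT2] using hs
    have hdy2 : ∑ i, (fun i => s (Sum.inr i)) i ≤ D / 2 := by
      have := hsdeg s hmem.1
      have h2 := hmem.2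
      simp only [hdy] at *
      omega
    exact SetLike.le_def.mp le_rfl
      (reduce_mem ht A hA S hS (D/2) (∑ i, s (Sum.inr i)) _ le_rfl hdy2)
  -- U1 has small rank via transpose
  have hU1W : Module.finrank F U1 ≤ Module.finrank F W := by
    have h1 : Module.finrank F U1 = B1.rank := by
      rw [hU1, Matrix.rank_eq_finrank_span_row]; rfl
    have h2 : B1.rank = Module.finrank F (Submodule.span F (Set.range B1.transpose)) :=
      Matrix.rank_eq_finrank_span_cols B1
    rw [h1, h2]
    apply Submodule.finrank_mono
    rw [Submodule.span_le]
    rintro _ ⟨b, rfl⟩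
    have hcol : B1.transpose b = ∑ s ∈ T1,
        (P.coeff s * ∏ i, (b : Fin n → F) i ^ s (Sum.inr i)) • mon (fun i => s (Sum.inl i)) := by
      funext a
      rw [Finset.sum_apply]
      exact Finset.sum_congr rfl fun s hs => by
        simp only [Pi.smul_apply, smul_eq_mul, hmon, hB1, Matrix.transpose_apply]; ring
    rw [hcol]
    refine Submodule.sum_mem _ fun s hs => Submodule.smul_mem _ _ ?_
    have hmem : s ∈ P.support ∧ 2 * dx s ≤ D := by simpa [hT1] using hs
    have hdx2 : ∑ i, (fun i => s (Sum.inl i)) i ≤ D / 2 := by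
      have h2 := hmem.2
      simp only [hdx] at *
      omega
    exact SetLike.le_def.mp le_rfl
      (reduce_mem ht A hA S hS (D/2) (∑ i, s (Sum.inl i)) _ le_rfl hdx2)
  -- rows of B span everything
  have htop : (⊤ : Submodule F (↥S → F)) ≤ U1 ⊔ U2 := by
    have hsingle : ∀ a : ↥S, (Pi.single a (1:F) : ↥S → F) ∈ U1 ⊔ U2 := by
      intro a
      have hne : MvPolynomial.eval (Sum.elim (a : Fin n → F) (a : Fin n → F)) P ≠ 0 :=
        hdiag a a.2
      have heq : (Pi.single a (1:F) : ↥S → F)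
          = (MvPolynomial.eval (Sum.elim (a : Fin n → F) (a : Fin n → F)) P)⁻¹ •
            (fun b : ↥S => MvPolynomial.eval (Sum.elim (a : Fin n → F) (b : Fin n → F)) P) := by
        funext b
        rcases eq_or_ne b a with rfl | hba
        · simp [Pi.single_apply, inv_mul_cancel₀ hne]
        · have : MvPolynomial.eval (Sum.elim (a : Fin n → F) (b : Fin n → F)) P = 0 :=
            hoff a a.2 b b.2 (fun h => hba (Subtype.ext h.symm))
          simp [Pi.single_apply, hba, this]
      rw [heq]
      refine Submodule.smul_mem _ _ ?_
      have hfun : (fun b : ↥S => MvPolynomial.eval (Sum.elim (a : Fin n → F) (b : Fin n → F)) P)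
          = B1 a + B2 a := funext fun b => hsplit a b
      rw [hfun]
      exact Submodule.add_mem _
        (Submodule.mem_sup_left (Submodule.subset_span ⟨a, rfl⟩))
        (Submodule.mem_sup_right (Submodule.subset_span ⟨a, rfl⟩))
    intro x _
    have hx : x = ∑ a : ↥S, x a • (Pi.single a (1:F) : ↥S → F) := by
      funext b
      rw [Finset.sum_apply]
      simp [Pi.single_apply]
    rw [hx]
    exact Submodule.sum_mem _ fun a _ => Submodule.smul_mem _ _ (hsingle a)
  -- card bound
  have hScard : S.card ≤ 2 * M := by
    have h1 : Module.finrank F (⊤ : Submodule F (↥S → F)) = S.card := by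
      rw [finrank_top, Module.finrank_fintype_fun_eq_card, Fintype.card_coe]
    have h2 : Module.finrank F (⊤ : Submodule F (↥S → F))
        ≤ Module.finrank F (U1 ⊔ U2 : Submodule F (↥S → F)) :=
      Submodule.finrank_mono htop
    have h3 : Module.finrank F (U1 ⊔ U2 : Submodule F (↥S → F))
        ≤ Module.finrank F U1 + Module.finrank F U2 :=
      Submodule.finrank_add_le_finrank_add_finrank U1 U2
    have h4 : Module.finrank F U2 ≤ Module.finrank F W := Submodule.finrank_mono hU2W
    omega
  -- analytic part
  have hkey : (M : ℝ) ≤ ((t : ℝ) * J t (2 * n * ((t:ℝ) - 1) / D)) ^ n := by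
    have htR : (t:ℝ) ≠ 0 := Nat.cast_ne_zero.mpr ht.ne'
    have ht1R : ((t:ℝ) - 1) ≠ 0 := by
      have : (2:ℝ) ≤ (t:ℝ) := by exact_mod_cast ht2
      linarith
    have hnR : (n:ℝ) ≠ 0 := Nat.cast_ne_zero.mpr hn0
    have hDR : (D:ℝ) ≠ 0 := Nat.cast_ne_zero.mpr hD0
    have hexp : -(((t:ℝ) - 1) / (2 * (n:ℝ) * ((t:ℝ) - 1) / (D:ℝ))) = -((D:ℝ) / (2 * (n:ℝ))) := by
      field_simp
    have htJ : (t : ℝ) * J t (2 * n * ((t:ℝ) - 1) / D)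
        = sInf {y : ℝ | ∃ x : ℝ, 0 < x ∧ x < 1 ∧
            y = (1 - x ^ t) / (1 - x) * x ^ (-((D:ℝ) / (2 * (n:ℝ))))} := by
      rw [J, ← mul_assoc, mul_one_div_cancel htR, one_mul, hexp]
    have helem : ∀ y ∈ {y : ℝ | ∃ x : ℝ, 0 < x ∧ x < 1 ∧
        y = (1 - x ^ t) / (1 - x) * x ^ (-((D:ℝ) / (2 * (n:ℝ))))},
        (M:ℝ) ≤ y ^ n ∧ 0 ≤ y := by
      rintro y ⟨x, hx0, hx1, rfl⟩
      set G : ℝ := ∑ k ∈ Finset.range t, x ^ k with hG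
      have hG0 : 0 ≤ G := by
        rw [hG]
        exact Finset.sum_nonneg fun k _ => by positivity
      rw [geom_eq' t x hx1.ne]
      constructor
      · -- main inequality
        have hMx : (M:ℝ) * x ^ ((D:ℝ)/2) ≤ G ^ n := by
          have step1 : (M:ℝ) * x ^ ((D:ℝ)/2) = ∑ _f ∈ Efin, x ^ ((D:ℝ)/2) := by
            rw [Finset.sum_const, nsmul_eq_mul, hM]
          have step2 : ∑ _f ∈ Efin, x ^ ((D:ℝ)/2) ≤ ∑ f ∈ Efin, x ^ (∑ i, ((f i : ℕ))) := by
            refine Finset.sum_le_sum fun f hf => ?_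
            rw [← Real.rpow_natCast x (∑ i, ((f i : ℕ)))]
            apply Real.rpow_le_rpow_of_exponent_ge hx0 hx1.le
            have h2f : 2 * ∑ i, ((f i : ℕ)) ≤ D := (Finset.mem_filter.mp hf).2
            have h2fR : (2:ℝ) * ((∑ i, ((f i : ℕ)) : ℕ) : ℝ) ≤ (D:ℝ) := by
              exact_mod_cast h2f
            linarith
          have step3 : ∑ f ∈ Efin, x ^ (∑ i, ((f i : ℕ)))
              ≤ ∑ f : Fin n → Fin t, x ^ (∑ i, ((f i : ℕ))) := by
            apply Finset.sum_le_sum_of_subset_of_nonneg (Finset.filter_subset _ _)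
            intro f _ _
            positivity
          have step4 : ∑ f : Fin n → Fin t, x ^ (∑ i, ((f i : ℕ))) = G ^ n := by
            have e1 : ∀ f : Fin n → Fin t, x ^ (∑ i, ((f i : ℕ))) = ∏ i, x ^ ((f i : ℕ)) :=
              fun f => by rw [Finset.prod_pow_eq_pow_sum]
            simp_rw [e1]
            have e3 : ∏ i : Fin n, ∑ k ∈ (Finset.univ : Finset (Fin t)), x ^ ((k : ℕ))
                = ∑ p ∈ Fintype.piFinset (fun _ : Fin n => (Finset.univ : Finset (Fin t))),
                    ∏ i, x ^ ((p i : ℕ)) := Finset.prod_univ_sum _ _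
            rw [Fintype.piFinset_univ] at e3
            rw [← e3]
            have e2 : ∀ i : Fin n, ∑ k : Fin t, x ^ ((k : ℕ)) = G := by
              intro i
              rw [hG, Fin.sum_univ_eq_sum_range (fun k => x ^ k) t]
            rw [Finset.prod_congr rfl fun i _ => e2 i, Finset.prod_const, Finset.card_univ,
              Fintype.card_fin]
          calc (M:ℝ) * x ^ ((D:ℝ)/2) = ∑ _f ∈ Efin, x ^ ((D:ℝ)/2) := step1
          _ ≤ ∑ f ∈ Efin, x ^ (∑ i, ((f i : ℕ))) := step2
          _ ≤ ∑ f : Fin n → Fin t, x ^ (∑ i, ((f i : ℕ))) := step3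
          _ = G ^ n := step4
        have hpowy : (G * x ^ (-((D:ℝ) / (2 * (n:ℝ))))) ^ n = G ^ n * x ^ (-((D:ℝ)/2)) := by
          rw [mul_pow]
          congr 1
          rw [← Real.rpow_natCast (x ^ (-((D:ℝ) / (2 * (n:ℝ))))) n, ← Real.rpow_mul hx0.le]
          congr 1
          field_simp
        rw [hpowy]
        have hxp : (0:ℝ) < x ^ (-((D:ℝ)/2)) := Real.rpow_pos_of_pos hx0 _
        have hcancel : x ^ ((D:ℝ)/2) * x ^ (-((D:ℝ)/2)) = 1 := by
          rw [← Real.rpow_add hx0]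
          simp
        calc (M:ℝ) = (M:ℝ) * (x ^ ((D:ℝ)/2) * x ^ (-((D:ℝ)/2))) := by rw [hcancel, mul_one]
        _ = ((M:ℝ) * x ^ ((D:ℝ)/2)) * x ^ (-((D:ℝ)/2)) := by ring
        _ ≤ G ^ n * x ^ (-((D:ℝ)/2)) := mul_le_mul_of_nonneg_right hMx hxp.le
      · exact mul_nonneg hG0 (Real.rpow_nonneg hx0.le _)
    have hne : {y : ℝ | ∃ x : ℝ, 0 < x ∧ x < 1 ∧
        y = (1 - x ^ t) / (1 - x) * x ^ (-((D:ℝ) / (2 * (n:ℝ))))}.Nonempty :=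
      ⟨_, ⟨1/2, by norm_num, by norm_num, rfl⟩⟩
    have hc : (M:ℝ) ^ ((n:ℝ)⁻¹) ≤ sInf {y : ℝ | ∃ x : ℝ, 0 < x ∧ x < 1 ∧
        y = (1 - x ^ t) / (1 - x) * x ^ (-((D:ℝ) / (2 * (n:ℝ))))} := by
      refine le_csInf hne fun y hy => ?_
      obtain ⟨h1, h2⟩ := helem y hy
      calc (M:ℝ) ^ ((n:ℝ)⁻¹) ≤ (y ^ n) ^ ((n:ℝ)⁻¹) :=
        Real.rpow_le_rpow (Nat.cast_nonneg M) h1 (by positivity)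
      _ = y := Real.pow_rpow_inv_natCast h2 hn0
    rw [htJ]
    calc (M:ℝ) = ((M:ℝ) ^ ((n:ℝ)⁻¹)) ^ n :=
      (Real.rpow_inv_natCast_pow (Nat.cast_nonneg M) hn0).symm
    _ ≤ _ := pow_le_pow_left₀ (Real.rpow_nonneg (Nat.cast_nonneg M) _) hc n
  calc (S.card : ℝ) ≤ 2 * M := by exact_mod_cast hScard
  _ ≤ 2 * ((t : ℝ) * J t (2 * n * ((t:ℝ) - 1) / D)) ^ n := by linarith
end

section
/- Let A_1, ..., A_n be subsets of ℝ, each of size q ≥ 2, and B = A_1 × ... × A_n. Suppose F ⊆ B satisfies |d(F)| ≤ s, where d(F) is the set of distances between distinct points of F. Let d := n(q−1)/s. Then |F| ≤ 2 · (q · J(q, d))^n, where J(q, d) := (1/q) inf_{0<x<1} ((1−x^q)/(1−x)) x^{−(q−1)/d}. -/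
open Finset Module

namespace Stmt10Aux

noncomputable section

variable {n : ℕ}

abbrev E (n : ℕ) := EuclideanSpace ℝ (Fin n)

def mon (a : Fin n → ℕ) (p : E n) : ℝ := ∏ i, p i ^ a i

lemma mon_add_single (a : Fin n → ℕ) (i : Fin n) (c : ℕ) (p : E n) :
    mon (a + (Pi.single i c : Fin n → ℕ)) p = p i ^ c * mon a p := by
  unfold mon
  have h1 : ∀ k, p k ^ (a + (Pi.single i c : Fin n → ℕ)) k = p k ^ a k * p k ^ ((Pi.single i c : Fin n → ℕ) k) := by
    intro k; rw [Pi.add_apply, pow_add]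
  simp only [h1]
  rw [Finset.prod_mul_distrib]
  have h2 : ∏ k, p k ^ ((Pi.single i c : Fin n → ℕ) k) = p i ^ c := by
    refine Fintype.prod_eq_single i ?_ |>.trans (by rw [Pi.single_eq_same])
    intro k hk
    rw [Pi.single_eq_of_ne hk, pow_zero]
  rw [h2, mul_comm]

lemma dist_sq (p p' : E n) : dist p p' ^ 2 = ∑ i, (p i - p' i) ^ 2 := by
  rw [EuclideanSpace.dist_eq, Real.sq_sqrt (by positivity)]
  congr 1; funext i; rw [Real.dist_eq, sq_abs]

/-- one-variable interpolation: `x^q` on a `q`-element set is a combination of lower powers -/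
lemma interp {q : ℕ} (hq : 1 ≤ q) (A : Set ℝ) (hA : A.ncard = q) :
    ∃ c : Fin q → ℝ, ∀ x ∈ A, x ^ q = ∑ j : Fin q, c j * x ^ (j : ℕ) := by
  classical
  have hfin : A.Finite := by
    rcases A.finite_or_infinite with h | h
    · exact h
    · exfalso; rw [h.ncard] at hA; omega
  set t : Finset ℝ := hfin.toFinset with ht
  have htc : t.card = q := by rw [ht, ← Set.ncard_eq_toFinset_card A hfin]; exact hA
  set P : Polynomial ℝ := Lagrange.interpolate t id (fun x => x ^ q) with hP
  have hinj : Set.InjOn (id : ℝ → ℝ) t := fun x _ y _ h => h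
  have hdeg : P.degree < q := by
    have := Lagrange.degree_interpolate_lt (fun x => x ^ q) hinj
    rwa [htc] at this
  have hnd : P.natDegree < q := by
    rcases eq_or_ne P 0 with h | h
    · rw [h, Polynomial.natDegree_zero]; omega
    · exact (Polynomial.natDegree_lt_iff_degree_lt h).mpr (by exact_mod_cast hdeg)
  refine ⟨fun j => P.coeff j, fun x hx => ?_⟩
  have hxt : x ∈ t := by rw [ht, Set.Finite.mem_toFinset]; exact hx
  have := Lagrange.eval_interpolate_at_node (fun x => x ^ q) hinj hxt
  rw [← hP] at this
  simp only [id_eq] at this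
  rw [← this, Polynomial.eval_eq_sum_range' hnd]
  exact Finset.sum_range fun j => P.coeff j * x ^ j

/-- exponent reduction: any monomial of degree ≤ s restricted to F lies in the span of
reduced monomials -/
lemma reduction {q s : ℕ} (hq : 1 ≤ q) (A : Fin n → Set ℝ) (hA : ∀ i, (A i).ncard = q)
    (F : Set (E n)) [Fintype F] (hFB : ∀ p ∈ F, ∀ i, p i ∈ A i)
    (W : Submodule ℝ (F → ℝ))
    (hW : ∀ a : Fin n → ℕ, (∀ i, a i < q) → ∑ i, a i ≤ s → (fun p : F => mon a ↑p) ∈ W) :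
    ∀ a : Fin n → ℕ, ∑ i, a i ≤ s → (fun p : F => mon a ↑p) ∈ W := by
  classical
  have key : ∀ m (a : Fin n → ℕ), ∑ i, a i = m → ∑ i, a i ≤ s →
      (fun p : F => mon a ↑p) ∈ W := by
    intro m
    induction m using Nat.strong_induction_on with
    | _ m ih =>
      intro a hm ha
      by_cases hall : ∀ i, a i < q
      · exact hW a hall ha
      · push_neg at hall
        obtain ⟨i, hi⟩ := hall
        obtain ⟨c, hc⟩ := interp hq (A i) (hA i)
        set b : Fin q → Fin n → ℕ := fun j => Function.update a i (a i - q + (j : ℕ)) with hb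
        have hsum_erase : a i + ∑ k ∈ univ.erase i, a k = m := by
          rw [← hm, ← Finset.add_sum_erase _ _ (mem_univ i)]
        have hbsum : ∀ j : Fin q, ∑ k, b j k = m - q + (j : ℕ) := by
          intro j
          rw [hb]
          rw [Finset.sum_update_of_mem (mem_univ i), Finset.sdiff_singleton_eq_erase]
          omega
        have hfun : (fun p : F => mon a ↑p)
            = ∑ j : Fin q, c j • (fun p : F => mon (b j) ↑p) := by
          funext p
          simp only [Finset.sum_apply, Pi.smul_apply, smul_eq_mul]
          have hbmon : ∀ j : Fin q, mon (b j) ↑p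
              = (p : E n) i ^ (a i - q + (j : ℕ)) * ∏ k ∈ univ.erase i, (p : E n) k ^ a k := by
            intro j
            unfold mon
            rw [hb]
            have : ∀ k, (p : E n) k ^ (Function.update a i (a i - q + (j:ℕ)) k)
                = Function.update (fun k => (p : E n) k ^ a k) i
                    ((p : E n) i ^ (a i - q + (j:ℕ))) k := by
              intro k
              by_cases hk : k = i
              · subst hk; simp [Function.update_self]
              · simp [Function.update_of_ne hk]
            simp only [this]
            rw [Finset.prod_update_of_mem (mem_univ i), Finset.sdiff_singleton_eq_erase]
          have hmon : mon a ↑p = (p : E n) i ^ a i * ∏ k ∈ univ.erase i, (p : E n) k ^ a k := by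
            unfold mon; rw [← Finset.mul_prod_erase _ _ (mem_univ i)]
          rw [hmon]
          have hpow : (p : E n) i ^ a i
              = (p : E n) i ^ (a i - q) * ∑ j : Fin q, c j * (p : E n) i ^ (j : ℕ) := by
            rw [← hc _ (hFB p p.2 i), ← pow_add]
            congr 1
            omega
          rw [hpow]
          rw [Finset.mul_sum, Finset.sum_mul]
          refine Finset.sum_congr rfl fun j _ => ?_
          rw [hbmon j, pow_add]
          ring
        rw [hfun]
        refine Submodule.sum_mem _ fun j _ => Submodule.smul_mem _ _ ?_
        refine ih (m - q + (j : ℕ)) ?_ (b j) (hbsum j) ?_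
        · have : q ≤ a i := hi
          have : q ≤ m := by omega
          have := j.2
          omega
        · rw [hbsum j]; omega
  intro a ha
  exact key (∑ i, a i) a rfl ha

def mon2 (a b : Fin n → ℕ) : E n → E n → ℝ := fun p p' => mon a p * mon b p'

def U (n k : ℕ) : Submodule ℝ (E n → E n → ℝ) :=
  Submodule.span ℝ {h | ∃ a b : Fin n → ℕ, (∑ i, a i) + (∑ i, b i) ≤ 2 * k ∧ h = mon2 a b}

lemma U_mono {k l : ℕ} (hkl : k ≤ l) : U n k ≤ U n l := by
  apply Submodule.span_mono
  rintro h ⟨a, b, hab, rfl⟩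
  exact ⟨a, b, by omega, rfl⟩

lemma mul_q_mem (r : ℝ) (k : ℕ) {h : E n → E n → ℝ} (hh : h ∈ U n k) :
    (fun p p' : E n => (dist p p' ^ 2 - r ^ 2) * h p p') ∈ U n (k + 1) := by
  classical
  induction hh using Submodule.span_induction with
  | mem x hx =>
    obtain ⟨a, b, hab, rfl⟩ := hx
    have hfun : (fun p p' : E n => (dist p p' ^ 2 - r ^ 2) * mon2 a b p p')
        = (∑ i : Fin n, (mon2 (a + (Pi.single i 2 : Fin n → ℕ)) b
            - (2 : ℝ) • mon2 (a + (Pi.single i 1 : Fin n → ℕ)) (b + (Pi.single i 1 : Fin n → ℕ))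
            + mon2 a (b + (Pi.single i 2 : Fin n → ℕ))))
          - (r ^ 2) • mon2 a b := by
      funext p p'
      simp only [Pi.sub_apply, Pi.add_apply, Pi.smul_apply, Finset.sum_apply,
        smul_eq_mul, mon2, mon_add_single]
      rw [dist_sq, sub_mul, Finset.sum_mul]
      congr 1
      refine Finset.sum_congr rfl fun i _ => ?_
      ring
    have hsingle : ∀ (i : Fin n) (c : ℕ), ∑ k, (Pi.single i c : Fin n → ℕ) k = c := by
      intro i c
      rw [Finset.sum_eq_single i (fun k _ hk => by simp [Pi.single_eq_of_ne hk]) (by simp),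
        Pi.single_eq_same]
    rw [hfun]
    refine Submodule.sub_mem _ (Submodule.sum_mem _ fun i _ => ?_) (Submodule.smul_mem _ _ ?_)
    · refine Submodule.add_mem _ (Submodule.sub_mem _ ?_ (Submodule.smul_mem _ _ ?_)) ?_
      · refine Submodule.subset_span ⟨_, _, ?_, rfl⟩
        simp only [Pi.add_apply, Finset.sum_add_distrib, hsingle]
        omega
      · refine Submodule.subset_span ⟨_, _, ?_, rfl⟩
        simp only [Pi.add_apply, Finset.sum_add_distrib, hsingle]
        omega
      · refine Submodule.subset_span ⟨_, _, ?_, rfl⟩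
        simp only [Pi.add_apply, Finset.sum_add_distrib, hsingle]
        omega
    · exact Submodule.subset_span ⟨a, b, by omega, rfl⟩
  | zero =>
    have : (fun p p' : E n => (dist p p' ^ 2 - r ^ 2) * (0 : E n → E n → ℝ) p p')
        = 0 := by funext p p'; simp
    rw [this]; exact Submodule.zero_mem _
  | add x y hx hy ihx ihy =>
    have : (fun p p' : E n => (dist p p' ^ 2 - r ^ 2) * (x + y) p p')
        = (fun p p' : E n => (dist p p' ^ 2 - r ^ 2) * x p p')
          + (fun p p' : E n => (dist p p' ^ 2 - r ^ 2) * y p p') := by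
      funext p p'; simp [mul_add]
    rw [this]; exact Submodule.add_mem _ ihx ihy
  | smul t x hx ihx =>
    have : (fun p p' : E n => (dist p p' ^ 2 - r ^ 2) * (t • x) p p')
        = t • (fun p p' : E n => (dist p p' ^ 2 - r ^ 2) * x p p') := by
      funext p p'; simp [mul_comm, mul_assoc, mul_left_comm]
    rw [this]; exact Submodule.smul_mem _ _ ihx

lemma prod_mem_U (D : Finset ℝ) :
    (fun p p' : E n => ∏ r ∈ D, (dist p p' ^ 2 - r ^ 2)) ∈ U n D.card := by
  classical
  induction D using Finset.induction_on with
  | empty =>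
    refine Submodule.subset_span ⟨0, 0, by simp, ?_⟩
    funext p p'; simp [mon2, mon]
  | insert r D hr ih =>
    have : (fun p p' : E n => ∏ x ∈ insert r D, (dist p p' ^ 2 - x ^ 2))
        = (fun p p' : E n => (dist p p' ^ 2 - r ^ 2)
            * (fun p p' : E n => ∏ x ∈ D, (dist p p' ^ 2 - x ^ 2)) p p') := by
      funext p p'; rw [Finset.prod_insert hr]
    rw [this, Finset.card_insert_of_notMem hr]
    exact mul_q_mem r D.card ih

lemma rank_le_of_cols_mem {ι : Type*} [Fintype ι] (M : Matrix ι ι ℝ)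
    (W : Submodule ℝ (ι → ℝ)) (hW : ∀ j, (fun i => M i j) ∈ W) :
    M.rank ≤ Module.finrank ℝ W := by
  classical
  have hr : LinearMap.range M.mulVecLin ≤ W := by
    rintro _ ⟨v, rfl⟩
    have hv : M.mulVecLin v = ∑ j, v j • (fun i => M i j) := by
      funext i
      simp [Matrix.mulVecLin_apply, Matrix.mulVec, dotProduct, Finset.sum_apply,
        mul_comm]
    rw [hv]
    exact Submodule.sum_mem _ fun j _ => Submodule.smul_mem _ _ (hW j)
  exact Submodule.finrank_mono hr

lemma rank_add_le' {ι : Type*} [Fintype ι] (M1 M2 : Matrix ι ι ℝ) :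
    (M1 + M2).rank ≤ M1.rank + M2.rank := by
  have hr : LinearMap.range (M1 + M2).mulVecLin ≤
      LinearMap.range M1.mulVecLin ⊔ LinearMap.range M2.mulVecLin := by
    rw [Matrix.mulVecLin_add]
    rintro _ ⟨v, rfl⟩
    exact Submodule.mem_sup.2
      ⟨_, LinearMap.mem_range_self _ v, _, LinearMap.mem_range_self _ v, rfl⟩
  exact (Submodule.finrank_mono hr).trans
    (Submodule.finrank_add_le_finrank_add_finrank _ _)

end

end Stmt10Aux

theorem stmt_10 (n s q : ℕ) (hq : 2 ≤ q) (A : Fin n → Set ℝ)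
    (hA : ∀ i, (A i).ncard = q)
    (F : Set (EuclideanSpace ℝ (Fin n))) (hF : F.Finite)
    (hFB : ∀ p ∈ F, ∀ i, p i ∈ A i)
    (hdist : {d : ℝ | ∃ p₁ ∈ F, ∃ p₂ ∈ F, p₁ ≠ p₂ ∧ d = dist p₁ p₂}.ncard ≤ s) :
    (F.ncard : ℝ) ≤ 2 * ((q : ℝ) * J q (n * (q - 1) / s)) ^ n := by
  classical
  haveI : Fintype F := hF.fintype
  open Finset Module Stmt10Aux in
  -- distance set
  have hDfin : {d : ℝ | ∃ p₁ ∈ F, ∃ p₂ ∈ F, p₁ ≠ p₂ ∧ d = dist p₁ p₂}.Finite := by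
    apply Set.Finite.subset ((hF.prod hF).image (fun z => dist z.1 z.2))
    rintro d ⟨p₁, h₁, p₂, h₂, hne, rfl⟩
    exact ⟨(p₁, p₂), ⟨h₁, h₂⟩, rfl⟩
  set D : Finset ℝ := hDfin.toFinset with hD
  have hDs : D.card ≤ s := by
    rw [hD, ← Set.ncard_eq_toFinset_card _ hDfin]; exact hdist
  -- monomial index set
  set S : Finset (Fin n → ℕ) :=
    (Fintype.piFinset fun _ : Fin n => Finset.range q).filter (fun a => ∑ i, a i ≤ s) with hS
  set N := S.card with hN
  -- submodule W
  set W : Submodule ℝ (F → ℝ) :=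
    Submodule.span ℝ ((S.image fun a => fun p : F => Stmt10Aux.mon a ↑p : Finset (F → ℝ)) :
      Set (F → ℝ)) with hW
  have hWrank : Module.finrank ℝ W ≤ N :=
    le_trans (finrank_span_finset_le_card _) Finset.card_image_le
  have hWgen : ∀ a : Fin n → ℕ, (∀ i, a i < q) → ∑ i, a i ≤ s →
      (fun p : F => Stmt10Aux.mon a ↑p) ∈ W := by
    intro a h1 h2
    apply Submodule.subset_span
    simp only [Finset.coe_image, Set.mem_image, Finset.mem_coe]
    refine ⟨a, ?_, rfl⟩
    rw [hS, Finset.mem_filter, Fintype.mem_piFinset]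
    exact ⟨fun i => Finset.mem_range.2 (h1 i), h2⟩
  have hred := Stmt10Aux.reduction (by omega) A hA F hFB W hWgen
  -- decomposition of the product polynomial
  have hGU : (fun p p' : Stmt10Aux.E n => ∏ r ∈ D, (dist p p' ^ 2 - r ^ 2)) ∈
      Stmt10Aux.U n s := Stmt10Aux.U_mono hDs (Stmt10Aux.prod_mem_U D)
  rw [Stmt10Aux.U, Submodule.mem_span_set'] at hGU
  obtain ⟨m, t, g, hsum⟩ := hGU
  have hgen : ∀ i : Fin m, ∃ a b : Fin n → ℕ, (∑ k, a k) + (∑ k, b k) ≤ 2 * s ∧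
      (g i : Stmt10Aux.E n → Stmt10Aux.E n → ℝ) = Stmt10Aux.mon2 a b := fun i => (g i).2
  choose a b hdeg heq using hgen
  -- matrices
  set M : Matrix F F ℝ :=
    fun p p' => ∏ r ∈ D, (dist (p : Stmt10Aux.E n) ↑p' ^ 2 - r ^ 2) with hM
  set M1 : Matrix F F ℝ := fun p p' =>
    ∑ i ∈ Finset.univ.filter (fun i => ∑ k, a i k ≤ s),
      t i * (Stmt10Aux.mon (a i) ↑p * Stmt10Aux.mon (b i) ↑p') with hM1
  set M2 : Matrix F F ℝ := fun p p' =>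
    ∑ i ∈ Finset.univ.filter (fun i => ¬ (∑ k, a i k ≤ s)),
      t i * (Stmt10Aux.mon (a i) ↑p * Stmt10Aux.mon (b i) ↑p') with hM2
  have hsplit : M = M1 + M2 := by
    funext p p'
    have h1 := congrFun (congrFun hsum (↑p : Stmt10Aux.E n)) (↑p' : Stmt10Aux.E n)
    have h0 : M p p' = ∑ i : Fin m,
        t i * (Stmt10Aux.mon (a i) ↑p * Stmt10Aux.mon (b i) ↑p') := by
      rw [hM]
      dsimp only
      rw [← h1]
      simp only [Finset.sum_apply, Pi.smul_apply, smul_eq_mul]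
      refine Finset.sum_congr rfl fun i _ => ?_
      rw [heq i]; rfl
    have h2 : (M1 + M2) p p' = M1 p p' + M2 p p' := rfl
    rw [h2, h0, hM1, hM2]
    dsimp only
    rw [← Finset.sum_filter_add_sum_filter_not Finset.univ (fun i => ∑ k, a i k ≤ s)]
  -- M is diagonal with nonzero entries
  have hc : ∀ r ∈ D, r ≠ 0 := by
    intro r hr
    rw [hD, Set.Finite.mem_toFinset] at hr
    obtain ⟨p₁, h₁, p₂, h₂, hne, rfl⟩ := hr
    exact dist_ne_zero.2 hne
  set c : F → ℝ := fun _ => ∏ r ∈ D, (0 - r ^ 2) with hcdef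
  have hcne : ∀ p : F, c p ≠ 0 := by
    intro p
    rw [hcdef]
    refine Finset.prod_ne_zero_iff.2 fun r hr => ?_
    rw [zero_sub, neg_ne_zero]
    exact pow_ne_zero 2 (hc r hr)
  have hdiag : M = Matrix.diagonal c := by
    funext p p'
    by_cases hpp : p = p'
    · subst hpp
      rw [Matrix.diagonal_apply_eq, hM, hcdef]
      exact Finset.prod_congr rfl fun r _ => by rw [dist_self]; norm_num
    · rw [Matrix.diagonal_apply_ne _ hpp, hM]
      have hmem : dist (p : Stmt10Aux.E n) ↑p' ∈ D := by
        rw [hD, Set.Finite.mem_toFinset]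
        exact ⟨↑p, p.2, ↑p', p'.2, Subtype.coe_injective.ne hpp, rfl⟩
      exact Finset.prod_eq_zero hmem (by ring)
  have hrankM : M.rank = Fintype.card F := by
    rw [hdiag, Matrix.rank_diagonal]
    exact Fintype.card_congr (Equiv.subtypeUnivEquiv hcne)
  -- column bounds
  have hcols1 : ∀ p' : F, (fun p : F => M1 p p') ∈ W := by
    intro p'
    have heq1 : (fun p : F => M1 p p')
        = ∑ i ∈ Finset.univ.filter (fun i => ∑ k, a i k ≤ s),
            (t i * Stmt10Aux.mon (b i) ↑p') • (fun p : F => Stmt10Aux.mon (a i) ↑p) := by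
      funext p
      rw [hM1]
      simp only [Finset.sum_apply, Pi.smul_apply, smul_eq_mul]
      exact Finset.sum_congr rfl fun i _ => by ring
    rw [heq1]
    refine Submodule.sum_mem _ fun i hi => Submodule.smul_mem _ _ (hred _ ?_)
    exact (Finset.mem_filter.1 hi).2
  have hcols2 : ∀ p : F, (fun p' : F => M2 p p') ∈ W := by
    intro p
    have heq2 : (fun p' : F => M2 p p')
        = ∑ i ∈ Finset.univ.filter (fun i => ¬ (∑ k, a i k ≤ s)),
            (t i * Stmt10Aux.mon (a i) ↑p) • (fun p' : F => Stmt10Aux.mon (b i) ↑p') := by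
      funext p'
      rw [hM2]
      simp only [Finset.sum_apply, Pi.smul_apply, smul_eq_mul]
      exact Finset.sum_congr rfl fun i _ => by ring
    rw [heq2]
    refine Submodule.sum_mem _ fun i hi => Submodule.smul_mem _ _ (hred _ ?_)
    have h3 := (Finset.mem_filter.1 hi).2
    have h4 := hdeg i
    omega
  have hr1 : M1.rank ≤ N := (Stmt10Aux.rank_le_of_cols_mem M1 W hcols1).trans hWrank
  have hr2 : M2.rank ≤ N := by
    rw [← Matrix.rank_transpose]
    exact (Stmt10Aux.rank_le_of_cols_mem M2.transpose W (fun p => hcols2 p)).trans hWrank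
  have hcard : Fintype.card F ≤ 2 * N := by
    have h5 := Stmt10Aux.rank_add_le' M1 M2
    rw [← hsplit, hrankM] at h5
    omega
  -- analytic part
  set d : ℝ := ↑n * ((q : ℝ) - 1) / ↑s with hd
  set setJ : Set ℝ := {y : ℝ | ∃ x : ℝ, 0 < x ∧ x < 1 ∧
    y = (1 - x ^ q) / (1 - x) * x ^ (-(((q : ℝ) - 1) / d))} with hsetJ
  have hq1 : (1 : ℝ) ≤ (q : ℝ) := by exact_mod_cast Nat.one_le_of_lt hq
  have hqne : (q : ℝ) ≠ 0 := by positivity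
  have hqJ : (q : ℝ) * J q d = sInf setJ := by
    rw [J, hsetJ, ← mul_assoc, mul_one_div, div_self hqne, one_mul]
  have hne : setJ.Nonempty := by
    refine ⟨_, (1:ℝ)/2, by norm_num, by norm_num, rfl⟩
  have hd0 : 0 ≤ d := by
    rw [hd]
    apply div_nonneg (mul_nonneg (by positivity) (by linarith)) (by positivity)
  have hexp : 0 ≤ ((q : ℝ) - 1) / d := div_nonneg (by linarith) hd0
  have hone : ∀ y ∈ setJ, (1 : ℝ) ≤ y := by
    rintro y ⟨x, hx0, hx1, rfl⟩
    have h1 : (1 : ℝ) ≤ (1 - x ^ q) / (1 - x) := by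
      rw [le_div_iff₀ (by linarith)]
      have hxq : x ^ q ≤ x ^ 1 := pow_le_pow_of_le_one hx0.le hx1.le (by omega)
      rw [pow_one] at hxq
      linarith
    have h2 : (1 : ℝ) ≤ x ^ (-(((q : ℝ) - 1) / d)) :=
      Real.one_le_rpow_of_pos_of_le_one_of_nonpos hx0 hx1.le (neg_nonpos.2 hexp)
    nlinarith
  have hInf1 : 1 ≤ sInf setJ := le_csInf hne hone
  have hInf0 : 0 ≤ sInf setJ := by linarith
  -- key counting inequality
  have hkey : (N : ℝ) ≤ (sInf setJ) ^ n := by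
    rcases Nat.eq_zero_or_pos n with hn | hn
    · subst hn
      have hN1 : N ≤ 1 := by
        rw [hN]
        exact Finset.card_le_one.2 fun x _ y _ => funext fun i => i.elim0
      rw [pow_zero]
      exact_mod_cast hN1
    rcases Nat.eq_zero_or_pos s with hs | hs
    · have hN1 : N ≤ 1 := by
        rw [hN]
        refine Finset.card_le_one.2 fun x hx y hy => ?_
        have hx2 := (Finset.mem_filter.1 hx).2
        have hy2 := (Finset.mem_filter.1 hy).2
        rw [hs, Nat.le_zero, Finset.sum_eq_zero_iff] at hx2 hy2
        funext i
        rw [hx2 i (Finset.mem_univ i), hy2 i (Finset.mem_univ i)]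
      have : (N : ℝ) ≤ 1 := by exact_mod_cast hN1
      exact this.trans (one_le_pow₀ hInf1)
    -- main case : n ≥ 1, s ≥ 1
    have hnne : (n : ℝ) ≠ 0 := by positivity
    have hsne : (s : ℝ) ≠ 0 := by positivity
    have hq2 : (2 : ℝ) ≤ (q : ℝ) := by exact_mod_cast hq
    have hq1' : (q : ℝ) - 1 ≠ 0 := by linarith
    have hexp_eq : ((q : ℝ) - 1) / d = (s : ℝ) / n := by
      rw [hd]
      field_simp
    have hkey2 : ∀ y ∈ setJ, (N : ℝ) ≤ y ^ n := by
      rintro y ⟨x, hx0, hx1, rfl⟩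
      have hgeom : (1 - x ^ q) / (1 - x) = ∑ j ∈ Finset.range q, x ^ j := by
        rw [geom_sum_eq (by linarith : x ≠ 1), div_eq_div_iff (by linarith) (by linarith)]
        ring
      have hcount : (N : ℝ) * x ^ s ≤ (∑ j ∈ Finset.range q, x ^ j) ^ n := by
        calc (N : ℝ) * x ^ s = ∑ _a ∈ S, x ^ s := by
              rw [Finset.sum_const, nsmul_eq_mul, hN]
        _ ≤ ∑ aa ∈ S, x ^ (∑ i, aa i) := by
              refine Finset.sum_le_sum fun aa haS => ?_
              exact pow_le_pow_of_le_one hx0.le hx1.le (Finset.mem_filter.1 haS).2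
        _ ≤ ∑ aa ∈ Fintype.piFinset (fun _ : Fin n => Finset.range q), x ^ (∑ i, aa i) := by
              refine Finset.sum_le_sum_of_subset_of_nonneg ?_ (fun aa _ _ => by positivity)
              rw [hS]; exact Finset.filter_subset _ _
        _ = ∑ aa ∈ Fintype.piFinset (fun _ : Fin n => Finset.range q), ∏ i, x ^ aa i := by
              exact Finset.sum_congr rfl fun aa _ =>
                (Finset.prod_pow_eq_pow_sum Finset.univ aa x).symm
        _ = ∏ _i : Fin n, ∑ j ∈ Finset.range q, x ^ j := (Finset.prod_univ_sum _ _).symm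
        _ = (∑ j ∈ Finset.range q, x ^ j) ^ n := by
              rw [Finset.prod_const, Finset.card_univ, Fintype.card_fin]
      have hxs : (0 : ℝ) < x ^ s := by positivity
      have hy : ((1 - x ^ q) / (1 - x) * x ^ (-(((q : ℝ) - 1) / d))) ^ n
          = (∑ j ∈ Finset.range q, x ^ j) ^ n * (x ^ s)⁻¹ := by
        rw [mul_pow, hgeom]
        congr 1
        rw [hexp_eq, ← Real.rpow_natCast (x ^ (-((s : ℝ) / ↑n))) n, ← Real.rpow_mul hx0.le]
        have he : -((s : ℝ) / ↑n) * ↑n = -(s : ℝ) := by field_simp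
        rw [he, Real.rpow_neg hx0.le, Real.rpow_natCast]
      rw [hy]
      calc (N : ℝ) = (N : ℝ) * x ^ s * (x ^ s)⁻¹ := by field_simp
      _ ≤ (∑ j ∈ Finset.range q, x ^ j) ^ n * (x ^ s)⁻¹ := by
            exact mul_le_mul_of_nonneg_right hcount (by positivity)
    have hN0 : (0 : ℝ) ≤ (N : ℝ) := Nat.cast_nonneg N
    set z : ℝ := (N : ℝ) ^ ((n : ℝ)⁻¹) with hz
    have hzn : z ^ n = (N : ℝ) := by
      rw [hz, ← Real.rpow_natCast ((N : ℝ) ^ ((n : ℝ)⁻¹)) n, ← Real.rpow_mul hN0,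
        inv_mul_cancel₀ hnne, Real.rpow_one]
    have hzle : ∀ y ∈ setJ, z ≤ y := by
      intro y hy
      by_contra hlt
      push_neg at hlt
      have h1 : (1 : ℝ) ≤ y := hone y hy
      have h2 : y ^ n < z ^ n := pow_lt_pow_left₀ hlt (by linarith) (by omega)
      rw [hzn] at h2
      exact absurd (hkey2 y hy) (by linarith)
    have hzI : z ≤ sInf setJ := le_csInf hne hzle
    calc (N : ℝ) = z ^ n := hzn.symm
    _ ≤ (sInf setJ) ^ n := pow_le_pow_left₀ (Real.rpow_nonneg hN0 _) hzI n
  -- conclusion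
  have hFcard : (F.ncard : ℝ) = (Fintype.card F : ℝ) := by
    rw [← Nat.card_coe_set_eq, Nat.card_eq_fintype_card]
  rw [hqJ]
  calc (F.ncard : ℝ) = (Fintype.card F : ℝ) := hFcard
  _ ≤ 2 * (N : ℝ) := by exact_mod_cast hcard
  _ ≤ 2 * (sInf setJ) ^ n := by linarith [hkey]
end

section
/- Suppose F ⊆ ℝ^n is a finite set such that the set of inner products {⟨p_1, p_2⟩ : p_1, p_2 ∈ F, p_1 ≠ p_2} between distinct points of F has at most s elements. Then |F| ≤ C(n + s, s). -/
open MvPolynomial Finset Module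

noncomputable section DezaFrankl

/-- Monomial functions of total degree ≤ s, indexed by multisets of size s over `Fin (n+1)`
(the extra index `0` is a slack variable). -/
def dfMono (n s : ℕ) (m : Sym (Fin (n + 1)) s) : EuclideanSpace ℝ (Fin n) → ℝ :=
  fun x => ∏ i : Fin n, x i ^ (m : Multiset (Fin (n + 1))).count i.succ

lemma dfMono_range (n s : ℕ) (d : Fin n →₀ ℕ) (hd : ∑ i, d i ≤ s) :
    (fun x : EuclideanSpace ℝ (Fin n) => ∏ i, x i ^ d i) ∈ Set.range (dfMono n s) := by
  classical
  set m0 : Multiset (Fin (n + 1)) :=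
    Multiset.replicate (s - ∑ i, d i) 0 + ∑ i : Fin n, Multiset.replicate (d i) i.succ with hm0
  have hcardsum : ∀ (t : Finset (Fin n)),
      Multiset.card (∑ i ∈ t, Multiset.replicate (d i) i.succ) = ∑ i ∈ t, d i := by
    intro t
    induction t using Finset.induction with
    | empty => simp
    | insert _ _ h ih => simp [Finset.sum_insert h, ih]
  have hcard : Multiset.card m0 = s := by
    rw [hm0, Multiset.card_add, Multiset.card_replicate, hcardsum]
    omega
  have hcount : ∀ i : Fin n, m0.count i.succ = d i := by
    intro i
    rw [hm0, Multiset.count_add, Multiset.count_replicate,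
      if_neg (Fin.succ_ne_zero i).symm, Multiset.count_sum']
    simp only [Multiset.count_replicate]
    rw [Finset.sum_congr rfl (fun j _ => ?_), Finset.sum_ite_eq Finset.univ i d]
    · simp
    · congr 1
      simp [Fin.succ_inj, eq_comm]
  refine ⟨⟨m0, hcard⟩, ?_⟩
  funext x
  simp only [dfMono, Sym.coe_mk, hcount]

lemma df_poly_mem (n s : ℕ) (P : MvPolynomial (Fin n) ℝ) (hP : P.totalDegree ≤ s) :
    (fun x : EuclideanSpace ℝ (Fin n) => MvPolynomial.eval (x : Fin n → ℝ) P) ∈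
      Submodule.span ℝ (Set.range (dfMono n s)) := by
  classical
  have hfun : (fun x : EuclideanSpace ℝ (Fin n) => MvPolynomial.eval (x : Fin n → ℝ) P)
      = ∑ d ∈ P.support, (P.coeff d) •
        (fun x : EuclideanSpace ℝ (Fin n) => ∏ i, (x : Fin n → ℝ) i ^ d i) := by
    funext x
    rw [eval_eq']
    simp [Finset.sum_apply]
  rw [hfun]
  refine Submodule.sum_mem _ fun d hd => Submodule.smul_mem _ _ (Submodule.subset_span ?_)
  refine dfMono_range n s d ?_
  have h1 : (d.sum fun _ e => e) ≤ P.totalDegree := le_totalDegree hd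
  have h2 : (d.sum fun _ e => e) = ∑ i, d i := Finsupp.sum_fintype _ _ fun _ => rfl
  omega

end DezaFrankl

theorem stmt_12 (n s : ℕ) (F : Set (EuclideanSpace ℝ (Fin n))) (hF : F.Finite)
    (hsp : {x : ℝ | ∃ p₁ ∈ F, ∃ p₂ ∈ F, p₁ ≠ p₂ ∧
      x = inner ℝ p₁ p₂}.ncard ≤ s) :
    F.ncard ≤ (n + s).choose s := by
  classical
  set A : Set ℝ := {x : ℝ | ∃ p₁ ∈ F, ∃ p₂ ∈ F, p₁ ≠ p₂ ∧ x = inner ℝ p₁ p₂} with hA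
  have hAfin : A.Finite := by
    have hsub : A ⊆ (fun pq : EuclideanSpace ℝ (Fin n) × EuclideanSpace ℝ (Fin n) =>
        (inner ℝ pq.1 pq.2 : ℝ)) '' (F ×ˢ F) := by
      rintro x ⟨p₁, hp₁, p₂, hp₂, -, rfl⟩
      exact ⟨(p₁, p₂), ⟨hp₁, hp₂⟩, rfl⟩
    exact ((hF.prod hF).image _).subset hsub
  set T : Finset ℝ := hAfin.toFinset with hT
  have hTcard : T.card ≤ s := by
    rwa [Set.ncard_eq_toFinset_card _ hAfin] at hsp
  set f : EuclideanSpace ℝ (Fin n) → (EuclideanSpace ℝ (Fin n) → ℝ) := fun p x =>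
    ∏ a ∈ T.erase (inner ℝ p p), ((inner ℝ x p : ℝ) - a) with hf
  -- each f p lies in the span of monomials
  have hmemW : ∀ p : EuclideanSpace ℝ (Fin n),
      f p ∈ Submodule.span ℝ (Set.range (dfMono n s)) := by
    intro p
    have hinner : ∀ x : EuclideanSpace ℝ (Fin n),
        (inner ℝ x p : ℝ) = ∑ i, p i * (x : Fin n → ℝ) i := by
      intro x
      rw [real_inner_comm]
      simp [PiLp.inner_apply, RCLike.inner_apply, mul_comm]
    have heq : f p = fun x : EuclideanSpace ℝ (Fin n) => MvPolynomial.eval (x : Fin n → ℝ)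
        (∏ a ∈ T.erase (inner ℝ p p), ((∑ i, C (p i) * X i) - C a)) := by
      funext x
      rw [hf]
      simp only [map_prod, map_sub, map_sum, map_mul, eval_C, eval_X]
      exact Finset.prod_congr rfl fun a _ => by rw [hinner]
    rw [heq]
    refine df_poly_mem n s _ ?_
    refine le_trans (totalDegree_finset_prod _ _)
      (le_trans ?_ ((Finset.card_erase_le (a := (inner ℝ p p : ℝ)) (s := T)).trans hTcard))
    have hone : ∀ a ∈ T.erase (inner ℝ p p),
        ((∑ i, C (p i) * X i : MvPolynomial (Fin n) ℝ) - C a).totalDegree ≤ 1 := by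
      intro a _
      refine (totalDegree_sub_C_le _ _).trans ?_
      refine (totalDegree_finset_sum _ _).trans (Finset.sup_le fun i _ => ?_)
      refine (totalDegree_mul _ _).trans ?_
      simp [totalDegree_C, totalDegree_X]
    refine le_trans (Finset.sum_le_sum hone) ?_
    simp
  -- diagonal entries nonzero
  have hdiag : ∀ p : EuclideanSpace ℝ (Fin n), f p p ≠ 0 := by
    intro p
    rw [hf]
    refine Finset.prod_ne_zero_iff.2 fun a ha => ?_
    exact sub_ne_zero.2 (Ne.symm (Finset.ne_of_mem_erase ha))
  -- triangularity
  have htri : ∀ p ∈ F, ∀ q ∈ F, q ≠ p → ‖p‖ ≤ ‖q‖ → f q p = 0 := by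
    intro p hp q hq hqp hnorm
    rw [hf]
    refine Finset.prod_eq_zero (i := (inner ℝ p q : ℝ)) ?_ (sub_self _)
    refine Finset.mem_erase.2 ⟨?_, ?_⟩
    · intro h
      have h1 : (inner ℝ q q : ℝ) = ‖q‖ ^ 2 := real_inner_self_eq_norm_sq q
      have h2 : ‖p - q‖ ^ 2 = ‖p‖ ^ 2 - 2 * (inner ℝ p q : ℝ) + ‖q‖ ^ 2 :=
        norm_sub_sq_real p q
      have hne : p - q ≠ 0 := sub_ne_zero.2 (Ne.symm hqp)
      have h3 : (0:ℝ) < ‖p - q‖ := norm_pos_iff.2 hne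
      nlinarith [norm_nonneg p, norm_nonneg q]
    · rw [hT, Set.Finite.mem_toFinset]
      exact ⟨p, hp, q, hq, Ne.symm hqp, rfl⟩
  -- linear independence
  have hli : LinearIndependent ℝ (fun p : hF.toFinset => f ↑p) := by
    rw [linearIndependent_iff']
    intro t g hg i hit
    by_contra hgi
    obtain ⟨p, hpmem, hmin⟩ := Finset.exists_min_image (t.filter fun j => g j ≠ 0)
      (fun j => ‖(j : EuclideanSpace ℝ (Fin n))‖) ⟨i, Finset.mem_filter.2 ⟨hit, hgi⟩⟩
    obtain ⟨hpt, hgp⟩ := Finset.mem_filter.1 hpmem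
    have hval := congrFun hg (↑p : EuclideanSpace ℝ (Fin n))
    simp only [Finset.sum_apply, Pi.smul_apply, smul_eq_mul, Pi.zero_apply] at hval
    have hzero : ∀ j ∈ t, j ≠ p → g j * f ↑j ↑p = 0 := by
      intro j hjt hjp
      by_cases hgj : g j = 0
      · rw [hgj, zero_mul]
      · have hjf : j ∈ t.filter fun j => g j ≠ 0 := Finset.mem_filter.2 ⟨hjt, hgj⟩
        have hle : ‖(p : EuclideanSpace ℝ (Fin n))‖ ≤ ‖(j : EuclideanSpace ℝ (Fin n))‖ :=
          hmin j hjf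
        have hpF : (p : EuclideanSpace ℝ (Fin n)) ∈ F := by
          have := p.2; rwa [Set.Finite.mem_toFinset] at this
        have hjF : (j : EuclideanSpace ℝ (Fin n)) ∈ F := by
          have := j.2; rwa [Set.Finite.mem_toFinset] at this
        have hne : (j : EuclideanSpace ℝ (Fin n)) ≠ (p : EuclideanSpace ℝ (Fin n)) :=
          fun h => hjp (Subtype.ext h)
        rw [htri _ hpF _ hjF hne hle, mul_zero]
    rw [Finset.sum_eq_single_of_mem p hpt hzero] at hval
    exact hgp ((mul_eq_zero.1 hval).resolve_right (hdiag _))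
  -- conclude
  have hW : FiniteDimensional ℝ (Submodule.span ℝ (Set.range (dfMono n s))) :=
    FiniteDimensional.span_of_finite ℝ (Set.finite_range _)
  set W := Submodule.span ℝ (Set.range (dfMono n s)) with hWdef
  let v : hF.toFinset → W := fun p => ⟨f ↑p, hmemW ↑p⟩
  have hv : LinearIndependent ℝ v := by
    have hcomp : W.subtype ∘ v = fun p : hF.toFinset => f ↑p := rfl
    exact LinearIndependent.of_comp W.subtype (hcomp ▸ hli)
  have h1 : Fintype.card hF.toFinset ≤ finrank ℝ W := hv.fintype_card_le_finrank
  have h2 : finrank ℝ W ≤ Fintype.card (Sym (Fin (n + 1)) s) :=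
    finrank_range_le_card (dfMono n s)
  have h3 : Fintype.card (Sym (Fin (n + 1)) s) = (n + s).choose s := by
    rw [Sym.card_sym_eq_choose]
    congr 1
    simp [Fintype.card_fin]
  have hcard : F.ncard = Fintype.card hF.toFinset := by
    rw [Set.ncard_eq_toFinset_card _ hF, Fintype.card_coe]
  omega
end

section
/- For q = 2: let A_1, ..., A_n ⊆ ℝ each have size 2 and B = A_1 × ... × A_n. If F ⊆ B has |d(F)| ≤ s (at most s distinct distances among distinct points), then |F| ≤ 2 · ∑_{i=0}^{s} C(n, i). -/
theorem stmt_14 (n s : ℕ) (A : Fin n → Set ℝ) (hA : ∀ i, (A i).ncard = 2)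
    (F : Set (EuclideanSpace ℝ (Fin n))) (hF : F.Finite)
    (hFB : ∀ p ∈ F, ∀ i, p i ∈ A i)
    (hdist : {d : ℝ | ∃ p₁ ∈ F, ∃ p₂ ∈ F, p₁ ≠ p₂ ∧ d = dist p₁ p₂}.ncard ≤ s) :
    F.ncard ≤ 2 * ∑ i ∈ Finset.range (s + 1), n.choose i := by
  classical
  choose a b hne hAeq using fun i => Set.ncard_eq_two.1 (hA i)
  haveI : Fintype F := hF.fintype
  have hsq : ∀ p ∈ F, ∀ i, (p i)^2 = (a i + b i) * p i - a i * b i := by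
    intro p hp i
    have h := hFB p hp i
    rw [hAeq i] at h
    rcases h with h | h <;> rw [h] <;> ring
  -- the distance set
  set D : Set ℝ := {d : ℝ | ∃ p₁ ∈ F, ∃ p₂ ∈ F, p₁ ≠ p₂ ∧ d = dist p₁ p₂} with hD
  have hDfin : D.Finite := by
    apply Set.Finite.subset ((hF.prod hF).image (fun q => dist q.1 q.2))
    rintro d ⟨p₁, h₁, p₂, h₂, _, rfl⟩
    exact ⟨(p₁, p₂), ⟨h₁, h₂⟩, rfl⟩
  set Df : Finset ℝ := hDfin.toFinset with hDf
  have hDcard : Df.card ≤ s := by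
    rwa [Set.ncard_eq_toFinset_card D hDfin] at hdist
  -- monomial functions on F
  set mon : Finset (Fin n) → (F → ℝ) :=
    fun S => (fun y => ∏ i ∈ S, (y : EuclideanSpace ℝ (Fin n)) i) with hmon
  set W : ℕ → Submodule ℝ (F → ℝ) :=
    fun k => Submodule.span ℝ
      (↑((Finset.univ.filter (fun S : Finset (Fin n) => S.card ≤ k)).image mon) : Set (F → ℝ))
    with hW
  have monW : ∀ k (S : Finset (Fin n)), S.card ≤ k → mon S ∈ W k := by
    intro k S hS
    apply Submodule.subset_span
    simp only [Finset.coe_image, Set.mem_image, Finset.mem_coe, Finset.mem_filter]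
    exact ⟨S, by simp [hS], rfl⟩
  have Wmono : ∀ {k m : ℕ}, k ≤ m → W k ≤ W m := by
    intro k m hkm
    apply Submodule.span_mono
    apply Finset.coe_subset.2
    apply Finset.image_subset_image
    intro S hS
    simp only [Finset.mem_filter] at hS ⊢
    exact ⟨hS.1, hS.2.trans hkm⟩
  -- key: multiplying by a coordinate raises degree by at most 1
  have step : ∀ (k : ℕ) (S : Finset (Fin n)), S.card ≤ k → ∀ j : Fin n,
      (fun y => mon S y * (y : EuclideanSpace ℝ (Fin n)) j) ∈ W (k+1) := by
    intro k S hS j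
    by_cases hj : j ∈ S
    · have hfun : (fun y => mon S y * (y : EuclideanSpace ℝ (Fin n)) j)
          = (a j + b j) • mon S - (a j * b j) • mon (S.erase j) := by
        funext y
        have h1 : mon S y = (y : EuclideanSpace ℝ (Fin n)) j * mon (S.erase j) y :=
          (Finset.mul_prod_erase S _ hj).symm
        have h2 := hsq y y.2 j
        simp only [Pi.sub_apply, Pi.smul_apply, smul_eq_mul, h1]
        linear_combination mon (S.erase j) y * h2
      rw [hfun]
      exact Submodule.sub_mem _
        (Submodule.smul_mem _ _ (monW _ S (hS.trans (Nat.le_succ k))))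
        (Submodule.smul_mem _ _ (monW _ _ (Finset.card_erase_le.trans (hS.trans (Nat.le_succ k)))))
    · have hfun : (fun y => mon S y * (y : EuclideanSpace ℝ (Fin n)) j)
          = mon (insert j S) := by
        funext y
        simp only [hmon, Finset.prod_insert hj]
        ring
      rw [hfun]
      exact monW _ _ (by rw [Finset.card_insert_of_notMem hj]; omega)
  -- multiplying by an affine function raises degree by at most 1
  have affmul : ∀ (k : ℕ) (f : F → ℝ), f ∈ W k → ∀ (c₀ : ℝ) (c : Fin n → ℝ),
      (fun y => f y * (c₀ + ∑ j, c j * (y : EuclideanSpace ℝ (Fin n)) j)) ∈ W (k+1) := by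
    intro k f hf c₀ c
    induction hf using Submodule.span_induction with
    | mem g hg =>
      simp only [Finset.coe_image, Set.mem_image, Finset.mem_coe, Finset.mem_filter] at hg
      obtain ⟨S, ⟨-, hS⟩, rfl⟩ := hg
      have hfun : (fun y => mon S y * (c₀ + ∑ j, c j * (y : EuclideanSpace ℝ (Fin n)) j))
          = c₀ • mon S + ∑ j, c j • (fun y => mon S y * (y : EuclideanSpace ℝ (Fin n)) j) := by
        funext y
        simp only [Pi.add_apply, Pi.smul_apply, Finset.sum_apply, smul_eq_mul]
        rw [mul_add, Finset.mul_sum]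
        congr 1
        · ring
        · exact Finset.sum_congr rfl (fun j _ => by ring)
      rw [hfun]
      exact Submodule.add_mem _
        (Submodule.smul_mem _ _ (monW _ S (hS.trans (Nat.le_succ k))))
        (Submodule.sum_mem _ (fun j _ => Submodule.smul_mem _ _ (step k S hS j)))
    | zero =>
      convert Submodule.zero_mem (W (k+1)) using 1
      funext y; simp
    | add g h _ _ ihg ihh =>
      have heq : (fun y => (g + h) y * (c₀ + ∑ j, c j * (y : EuclideanSpace ℝ (Fin n)) j))
          = (fun y => g y * (c₀ + ∑ j, c j * (y : EuclideanSpace ℝ (Fin n)) j))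
            + (fun y => h y * (c₀ + ∑ j, c j * (y : EuclideanSpace ℝ (Fin n)) j)) := by
        funext y; simp [add_mul]
      rw [heq]
      exact Submodule.add_mem _ ihg ihh
    | smul r g _ ihg =>
      have heq : (fun y => (r • g) y * (c₀ + ∑ j, c j * (y : EuclideanSpace ℝ (Fin n)) j))
          = r • (fun y => g y * (c₀ + ∑ j, c j * (y : EuclideanSpace ℝ (Fin n)) j)) := by
        funext y; simp [mul_assoc]
      rw [heq]
      exact Submodule.smul_mem _ _ ihg
  -- squared distance from a fixed point is affine on F
  have distsq : ∀ (p : F) (y : F) (d : ℝ),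
      d^2 - dist (p : EuclideanSpace ℝ (Fin n)) (y : EuclideanSpace ℝ (Fin n)) ^ 2
      = (d^2 - ∑ j, ((p : EuclideanSpace ℝ (Fin n)) j ^ 2 - a j * b j))
        + ∑ j, (2 * (p : EuclideanSpace ℝ (Fin n)) j - a j - b j)
            * (y : EuclideanSpace ℝ (Fin n)) j := by
    intro p y d
    have hd : dist (p : EuclideanSpace ℝ (Fin n)) (y : EuclideanSpace ℝ (Fin n)) ^ 2
        = ∑ j, ((p : EuclideanSpace ℝ (Fin n)) j - (y : EuclideanSpace ℝ (Fin n)) j)^2 := by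
      rw [EuclideanSpace.dist_eq]
      rw [Real.sq_sqrt (Finset.sum_nonneg (fun j _ => sq_nonneg _))]
      simp [Real.dist_eq, sq_abs]
    rw [hd]
    have : ∀ j : Fin n, ((p : EuclideanSpace ℝ (Fin n)) j - (y : EuclideanSpace ℝ (Fin n)) j)^2
        = ((p : EuclideanSpace ℝ (Fin n)) j ^ 2 - a j * b j)
          - (2 * (p : EuclideanSpace ℝ (Fin n)) j - a j - b j) * (y : EuclideanSpace ℝ (Fin n)) j := by
      intro j
      have h2 := hsq y y.2 j
      nlinarith [h2]
    rw [Finset.sum_congr rfl (fun j _ => this j), Finset.sum_sub_distrib]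
    ring
  -- products of factors indexed by a finset of distances
  have prodmem : ∀ (T : Finset ℝ) (p : F),
      (fun y : F => ∏ d ∈ T, (d^2 - dist (p : EuclideanSpace ℝ (Fin n)) (y : EuclideanSpace ℝ (Fin n)) ^ 2))
        ∈ W T.card := by
    intro T p
    induction T using Finset.induction_on with
    | empty =>
      simp only [Finset.prod_empty]
      have h0 : (fun _ : F => (1:ℝ)) = mon ∅ := by funext y; simp [hmon]
      rw [h0]
      exact monW 0 ∅ (by simp)
    | @insert d T hx ih =>
      rw [Finset.card_insert_of_notMem hx]
      have hfun : (fun y : F => ∏ e ∈ insert d T,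
            (e^2 - dist (p : EuclideanSpace ℝ (Fin n)) (y : EuclideanSpace ℝ (Fin n)) ^ 2))
          = (fun y : F => (∏ e ∈ T,
              (e^2 - dist (p : EuclideanSpace ℝ (Fin n)) (y : EuclideanSpace ℝ (Fin n)) ^ 2))
            * ((d^2 - ∑ j, ((p : EuclideanSpace ℝ (Fin n)) j ^ 2 - a j * b j))
              + ∑ j, (2 * (p : EuclideanSpace ℝ (Fin n)) j - a j - b j)
                  * (y : EuclideanSpace ℝ (Fin n)) j)) := by
        funext y
        rw [Finset.prod_insert hx, ← distsq p y d]
        ring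
      rw [hfun]
      exact affmul T.card _ ih _ _
  -- the family of functions
  set v : F → (F → ℝ) := fun p =>
    (fun y : F => ∏ d ∈ Df, (d^2 - dist (p : EuclideanSpace ℝ (Fin n)) (y : EuclideanSpace ℝ (Fin n)) ^ 2))
    with hv
  have hvW : ∀ p, v p ∈ W s := fun p => Wmono hDcard (prodmem Df p)
  have hoff : ∀ p y : F, p ≠ y → v p y = 0 := by
    intro p y hpy
    apply Finset.prod_eq_zero
      (i := dist (p : EuclideanSpace ℝ (Fin n)) (y : EuclideanSpace ℝ (Fin n)))
    · rw [hDf, Set.Finite.mem_toFinset]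
      exact ⟨p, p.2, y, y.2, Subtype.coe_injective.ne hpy, rfl⟩
    · ring
  have hdiagne : ∀ p : F, v p p ≠ 0 := by
    intro p
    rw [hv]
    simp only
    rw [Finset.prod_ne_zero_iff]
    intro d hd
    rw [dist_self]
    have hd' : d ∈ D := by rwa [hDf, Set.Finite.mem_toFinset] at hd
    obtain ⟨p₁, -, p₂, -, hne12, rfl⟩ := hd'
    have : dist p₁ p₂ ≠ 0 := by
      simpa using hne12
    intro hcon
    apply this
    nlinarith [dist_nonneg (x := p₁) (y := p₂)]
  have li : LinearIndependent ℝ v := by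
    rw [Fintype.linearIndependent_iff]
    intro g hg p
    have h := congrFun hg p
    simp only [Finset.sum_apply, Pi.smul_apply, smul_eq_mul, Pi.zero_apply] at h
    rw [Finset.sum_eq_single p (fun q _ hq => by rw [hoff q p hq, mul_zero])
      (fun hp => absurd (Finset.mem_univ p) hp)] at h
    rcases mul_eq_zero.1 h with h' | h'
    · exact h'
    · exact absurd h' (hdiagne p)
  have li' : LinearIndependent ℝ (fun p : F => (⟨v p, hvW p⟩ : W s)) :=
    LinearIndependent.of_comp ((W s).subtype) li
  have h1 : Fintype.card F ≤ Module.finrank ℝ (W s) :=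
    li'.fintype_card_le_finrank
  have h2 : Module.finrank ℝ (W s)
      ≤ (Finset.univ.filter (fun S : Finset (Fin n) => S.card ≤ s)).card := by
    refine le_trans ?_ (Finset.card_image_le
      (s := Finset.univ.filter (fun S : Finset (Fin n) => S.card ≤ s)) (f := mon))
    exact finrank_span_finset_le_card _
  have hcard : (Finset.univ.filter (fun S : Finset (Fin n) => S.card ≤ s)).card
      = ∑ i ∈ Finset.range (s+1), n.choose i := by
    have heq : (Finset.univ.filter (fun S : Finset (Fin n) => S.card ≤ s))
        = (Finset.range (s+1)).biUnion (fun i => Finset.powersetCard i Finset.univ) := by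
      ext S
      simp [Finset.mem_powersetCard, Nat.lt_succ_iff, eq_comm]
    rw [heq, Finset.card_biUnion]
    · exact Finset.sum_congr rfl fun i _ => by
        rw [Finset.card_powersetCard, Finset.card_univ, Fintype.card_fin]
    · intro i _ j _ hij
      simp only [Function.onFun, Finset.disjoint_left]
      intro S hSi hSj
      rw [Finset.mem_powersetCard] at hSi hSj
      exact hij (hSi.2.symm.trans hSj.2)
  have hfin : F.ncard = Fintype.card F := by
    rw [Set.ncard_eq_toFinset_card' F, Set.toFinset_card]
  rw [hfin]
  have := h1.trans (h2.trans_eq hcard)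
  omega
end

section
/- Let F ⊆ {0,1}^n ⊆ ℝ^n. If the set of Hamming weights of symmetric differences {|A Δ B| : A ≠ B, with characteristic vectors in F} has at most s elements, then |F| ≤ 2 · ∑_{i=0}^{s} C(n, i). -/
open Finset

noncomputable section Aux15

/-- Monomial indicator: 1 if `T ⊆ x` else 0, as a real function on the cube. -/
def aux15_mono {n : ℕ} (T : Finset (Fin n)) : Finset (Fin n) → ℝ :=
  fun x => if T ⊆ x then 1 else 0

/-- Span of monomials of degree at most `k`. -/
def aux15_W (n k : ℕ) : Submodule ℝ (Finset (Fin n) → ℝ) :=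
  Submodule.span ℝ (aux15_mono '' {T : Finset (Fin n) | T.card ≤ k})

lemma aux15_mono_mul {n : ℕ} (S T : Finset (Fin n)) :
    aux15_mono S * aux15_mono T = aux15_mono (S ∪ T) := by
  funext x
  simp only [Pi.mul_apply, aux15_mono, Finset.union_subset_iff]
  by_cases hS : S ⊆ x <;> by_cases hT : T ⊆ x <;> simp [hS, hT]

lemma aux15_W_mono (n : ℕ) {a b : ℕ} (h : a ≤ b) : aux15_W n a ≤ aux15_W n b :=
  Submodule.span_mono (Set.image_mono fun T hT => le_trans hT h)

lemma aux15_W_mul {n a b : ℕ} {f g : Finset (Fin n) → ℝ}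
    (hf : f ∈ aux15_W n a) (hg : g ∈ aux15_W n b) : f * g ∈ aux15_W n (a + b) := by
  have h := Submodule.mul_mem_mul hf hg
  rw [aux15_W, aux15_W, Submodule.span_mul_span] at h
  refine Submodule.span_le.2 ?_ h
  rintro _ ⟨_, ⟨S, hS, rfl⟩, _, ⟨T, hT, rfl⟩, rfl⟩
  show aux15_mono S * aux15_mono T ∈ _
  rw [aux15_mono_mul]
  exact Submodule.subset_span ⟨S ∪ T, le_trans (card_union_le S T) (add_le_add hS hT), rfl⟩

lemma aux15_one_mem (n : ℕ) : (1 : Finset (Fin n) → ℝ) ∈ aux15_W n 0 := by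
  have : (1 : Finset (Fin n) → ℝ) = aux15_mono ∅ := by
    funext x; simp [aux15_mono]
  rw [this]
  exact Submodule.subset_span ⟨∅, by simp, rfl⟩

lemma aux15_prod_mem {n : ℕ} {α : Type*} (E : Finset α) (p : α → Finset (Fin n) → ℝ)
    (hp : ∀ d ∈ E, p d ∈ aux15_W n 1) : (∏ d ∈ E, p d) ∈ aux15_W n E.card := by
  induction E using Finset.cons_induction with
  | empty => simpa using aux15_one_mem n
  | cons a E ha ih =>
    rw [Finset.prod_cons, Finset.card_cons]
    have h1 : p a ∈ aux15_W n 1 := hp a (Finset.mem_cons_self a E)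
    have h2 := ih fun d hd => hp d (Finset.mem_cons_of_mem hd)
    have := aux15_W_mul h1 h2
    rwa [add_comm] at this

/-- Each linear factor `c - |A Δ x|` lies in `W 1`. -/
lemma aux15_lin_mem {n : ℕ} (A : Finset (Fin n)) (c : ℝ) :
    (fun x : Finset (Fin n) => c - ((symmDiff A x).card : ℝ)) ∈ aux15_W n 1 := by
  have key : (fun x : Finset (Fin n) => c - ((symmDiff A x).card : ℝ)) =
      (c - A.card) • aux15_mono ∅ +
        ∑ i : Fin n, (if i ∈ A then (1 : ℝ) else -1) • aux15_mono {i} := by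
    funext x
    have hsd : (symmDiff A x).card = (A \ x).card + (x \ A).card := by
      rw [symmDiff_def]
      exact card_union_of_disjoint (disjoint_sdiff_sdiff)
    have hA : A.card = (A ∩ x).card + (A \ x).card := by
      rw [← card_inter_add_card_sdiff A x]
    simp only [Pi.add_apply, Pi.smul_apply, Finset.sum_apply, aux15_mono, smul_eq_mul,
      Finset.empty_subset, if_true, mul_one]
    have hsum : ∑ i : Fin n, (if i ∈ A then (1:ℝ) else -1) * (if {i} ⊆ x then 1 else 0)
        = ∑ i ∈ x, (if i ∈ A then (1:ℝ) else -1) := by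
      rw [← Finset.sum_subset (Finset.subset_univ x)]
      · refine Finset.sum_congr rfl fun i hi => by
          simp [Finset.singleton_subset_iff, hi]
      · intro i _ hi
        simp [Finset.singleton_subset_iff, hi]
    rw [hsum, Finset.sum_ite, Finset.sum_const, Finset.sum_const]
    have h1 : x.filter (· ∈ A) = x ∩ A := by ext i; simp [Finset.mem_inter, and_comm]
    have h2 : x.filter (¬ · ∈ A) = x \ A := by ext i; simp [Finset.mem_sdiff]
    rw [h1, h2, Finset.inter_comm]
    push_cast
    rw [hsd]
    push_cast
    rw [hA]
    push_cast
    ring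
  rw [key]
  refine Submodule.add_mem _ (Submodule.smul_mem _ _ (Submodule.subset_span ⟨∅, by simp, rfl⟩)) ?_
  exact Submodule.sum_mem _ fun i _ =>
    Submodule.smul_mem _ _ (Submodule.subset_span ⟨{i}, by simp, rfl⟩)

end Aux15

theorem stmt_15 (n s : ℕ) (F : Finset (Finset (Fin n)))
    (hsd : {k : ℕ | ∃ A ∈ F, ∃ B ∈ F, A ≠ B ∧ k = (symmDiff A B).card}.ncard ≤ s) :
    F.card ≤ 2 * ∑ i ∈ Finset.range (s + 1), n.choose i := by
  classical
  set D : Set ℕ := {k : ℕ | ∃ A ∈ F, ∃ B ∈ F, A ≠ B ∧ k = (symmDiff A B).card} with hD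
  have hDfin : D.Finite := by
    apply Set.Finite.subset (Set.finite_Icc 0 n)
    rintro k ⟨A, _, B, _, _, rfl⟩
    exact ⟨Nat.zero_le _, le_trans (Finset.card_le_card (Finset.subset_univ _)) (by simp)⟩
  set Df : Finset ℕ := hDfin.toFinset with hDf
  have hDcard : Df.card ≤ s := by
    rwa [← Set.ncard_coe_finset, hDf, Set.Finite.coe_toFinset]
  have hDpos : ∀ d ∈ Df, 0 < d := by
    intro d hd
    rw [hDf, Set.Finite.mem_toFinset] at hd
    obtain ⟨A, _, B, _, hne, rfl⟩ := hd
    rw [Finset.card_pos, Finset.symmDiff_nonempty]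
    exact hne
  -- the polynomials
  set f : Finset (Fin n) → Finset (Fin n) → ℝ :=
    fun A x => ∏ d ∈ Df, ((d : ℝ) - ((symmDiff A x).card : ℝ)) with hf
  have hfW : ∀ A, f A ∈ aux15_W n s := by
    intro A
    have : f A = ∏ d ∈ Df, (fun x => ((d : ℝ) - ((symmDiff A x).card : ℝ))) := by
      funext x; simp [hf]
    rw [this]
    exact aux15_W_mono n hDcard (aux15_prod_mem Df _ fun d _ => aux15_lin_mem A (d : ℝ))
  have hfself : ∀ A ∈ F, f A A ≠ 0 := by
    intro A _
    rw [hf]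
    simp only [symmDiff_self, Finset.bot_eq_empty, Finset.card_empty, Nat.cast_zero, sub_zero]
    exact Finset.prod_ne_zero_iff.2 fun d hd => Nat.cast_ne_zero.2 (hDpos d hd).ne'
  have hfoff : ∀ A ∈ F, ∀ B ∈ F, A ≠ B → f A B = 0 := by
    intro A hA B hB hne
    rw [hf]
    apply Finset.prod_eq_zero (i := (symmDiff A B).card)
    · rw [hDf, Set.Finite.mem_toFinset]
      exact ⟨A, hA, B, hB, hne, rfl⟩
    · simp
  -- linear independence
  have hli : LinearIndependent ℝ (fun A : ↥F => f (A : Finset (Fin n))) := by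
    rw [linearIndependent_iff']
    intro t g hsum i hit
    have := congrFun hsum (i : Finset (Fin n))
    simp only [Finset.sum_apply, Pi.smul_apply, smul_eq_mul, Pi.zero_apply] at this
    rw [Finset.sum_eq_single i] at this
    · rcases mul_eq_zero.1 this with h | h
      · exact h
      · exact absurd h (hfself i i.2)
    · intro j _ hji
      rw [hfoff j j.2 i i.2 (fun h => hji (Subtype.ext h)), mul_zero]
    · intro h; exact absurd hit h
  -- restrict to the submodule W s
  let g : ↥F → ↥(aux15_W n s) := fun A => ⟨f (A : Finset (Fin n)), hfW _⟩
  have hlig : LinearIndependent ℝ g :=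
    hli.of_comp (aux15_W n s).subtype
  -- generators as a finset
  set G : Finset (Finset (Fin n) → ℝ) :=
    (Finset.univ.filter (fun T : Finset (Fin n) => T.card ≤ s)).image aux15_mono with hG
  have hWG : aux15_W n s = Submodule.span ℝ (G : Set _) := by
    rw [aux15_W, hG]
    congr 1
    ext v
    simp [Set.mem_image]
  have hfd : FiniteDimensional ℝ (aux15_W n s) := by
    rw [hWG]
    exact FiniteDimensional.span_of_finite ℝ (Finset.finite_toSet G)
  have hcard1 : F.card ≤ Module.finrank ℝ (aux15_W n s) := by
    rw [← Fintype.card_coe]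
    exact hlig.fintype_card_le_finrank
  have hcard2 : Module.finrank ℝ (aux15_W n s) ≤ G.card := by
    rw [hWG]
    exact finrank_span_finset_le_card G
  have hcard3 : G.card ≤ ∑ i ∈ Finset.range (s + 1), n.choose i := by
    calc G.card ≤ (Finset.univ.filter (fun T : Finset (Fin n) => T.card ≤ s)).card :=
          Finset.card_image_le
    _ ≤ ∑ i ∈ Finset.range (s + 1), n.choose i := by
        have hsub : (Finset.univ.filter (fun T : Finset (Fin n) => T.card ≤ s)) ⊆
            (Finset.range (s+1)).biUnion
              (fun i => Finset.powersetCard i (Finset.univ : Finset (Fin n))) := by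
          intro T hT
          rw [Finset.mem_filter] at hT
          rw [Finset.mem_biUnion]
          exact ⟨T.card, Finset.mem_range.2 (Nat.lt_succ_of_le hT.2),
            Finset.mem_powersetCard.2 ⟨Finset.subset_univ T, rfl⟩⟩
        calc (Finset.univ.filter (fun T : Finset (Fin n) => T.card ≤ s)).card
            ≤ _ := Finset.card_le_card hsub
          _ ≤ ∑ i ∈ Finset.range (s+1),
                (Finset.powersetCard i (Finset.univ : Finset (Fin n))).card :=
              Finset.card_biUnion_le
          _ = ∑ i ∈ Finset.range (s + 1), n.choose i := by
              refine Finset.sum_congr rfl fun i _ => ?_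
              rw [Finset.card_powersetCard, Finset.card_univ, Fintype.card_fin]
  calc F.card ≤ Module.finrank ℝ (aux15_W n s) := hcard1
    _ ≤ G.card := hcard2
    _ ≤ ∑ i ∈ Finset.range (s + 1), n.choose i := hcard3
    _ ≤ 2 * ∑ i ∈ Finset.range (s + 1), n.choose i := Nat.le_mul_of_pos_left _ (by norm_num)
end

section
/- For any integers q ≥ 2, n ≥ 1, and s ≥ 1, the number of tuples (α_1,...,α_n) ∈ {0,1,...,q−1}^n with α_1 + ... + α_n ≤ s is at most (q · J(q, n(q−1)/s))^n, where J(q, d) := (1/q) inf_{0<x<1} ((1−x^q)/(1−x)) x^{−(q−1)/d}. -/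
open Finset in
lemma count_le_aux (n s q : ℕ) (x : ℝ) (hx0 : 0 ≤ x) (hx1 : x ≤ 1) :
    ((Finset.univ.filter
        (fun α : Fin n → Fin q => ∑ i, (α i : ℕ) ≤ s)).card : ℝ) * x ^ s ≤
      (∑ j ∈ Finset.range q, x ^ j) ^ n := by
  have h1 : (∑ j ∈ Finset.range q, x ^ j) ^ n
      = ∑ α : Fin n → Fin q, x ^ (∑ i, (α i : ℕ)) := by
    rw [show (∑ j ∈ Finset.range q, x ^ j) = ∑ j : Fin q, x ^ (j : ℕ) from
      (Fin.sum_univ_eq_sum_range (fun j => x ^ j) q).symm]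
    rw [show (∑ j : Fin q, x ^ (j : ℕ)) ^ n = ∏ _i : Fin n, ∑ j : Fin q, x ^ (j : ℕ) by
      simp [Finset.prod_const, Finset.card_univ]]
    rw [Finset.prod_univ_sum]
    simp [Finset.prod_pow_eq_pow_sum]
  rw [h1]
  calc ((Finset.univ.filter
        (fun α : Fin n → Fin q => ∑ i, (α i : ℕ) ≤ s)).card : ℝ) * x ^ s
      ≤ ∑ α ∈ Finset.univ.filter
          (fun α : Fin n → Fin q => ∑ i, (α i : ℕ) ≤ s), x ^ (∑ i, (α i : ℕ)) := by
        rw [← nsmul_eq_mul]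
        apply Finset.card_nsmul_le_sum
        intro α hα
        exact pow_le_pow_of_le_one hx0 hx1 (Finset.mem_filter.mp hα).2
    _ ≤ ∑ α : Fin n → Fin q, x ^ (∑ i, (α i : ℕ)) := by
        apply Finset.sum_le_sum_of_subset_of_nonneg (Finset.filter_subset _ _)
        intro α _ _
        positivity

theorem stmt_18 (n s q : ℕ) (hq : 2 ≤ q) (hn : 1 ≤ n) (hs : 1 ≤ s) :
    ((Finset.univ.filter
        (fun α : Fin n → Fin q => ∑ i, (α i : ℕ) ≤ s)).card : ℝ) ≤
      ((q : ℝ) * J q ((n : ℝ) * (q - 1) / s)) ^ n := by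
  have hn0 : (n : ℝ) ≠ 0 := by positivity
  have hs0 : (s : ℝ) ≠ 0 := by positivity
  have hq0 : (q : ℝ) ≠ 0 := by positivity
  have hq1 : (q : ℝ) - 1 ≠ 0 := by
    have : (2 : ℝ) ≤ q := by exact_mod_cast hq
    nlinarith
  set d : ℝ := (n : ℝ) * ((q : ℝ) - 1) / s with hd
  set S : Set ℝ := {y : ℝ | ∃ x : ℝ, 0 < x ∧ x < 1 ∧
    y = (1 - x ^ q) / (1 - x) * x ^ (-(((q : ℝ) - 1) / d))} with hS
  have hexp : ((q : ℝ) - 1) / d = (s : ℝ) / n := by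
    rw [hd]; field_simp
  set C : ℝ := ((Finset.univ.filter
        (fun α : Fin n → Fin q => ∑ i, (α i : ℕ) ≤ s)).card : ℝ) with hC
  have hC0 : 0 ≤ C := by positivity
  -- every element of S has y ^ n ≥ C
  have key : ∀ y ∈ S, C ≤ y ^ n ∧ 0 ≤ y := by
    rintro y ⟨x, hx0, hx1, rfl⟩
    have hxne : x ≠ 1 := ne_of_lt hx1
    have hgeom : (1 - x ^ q) / (1 - x) = ∑ j ∈ Finset.range q, x ^ j := by
      rw [geom_sum_eq hxne, ← neg_div_neg_eq, neg_sub, neg_sub]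
    have hpos : (0 : ℝ) < x ^ (-(((q : ℝ) - 1) / d)) := Real.rpow_pos_of_pos hx0 _
    have hgeom0 : 0 ≤ (1 - x ^ q) / (1 - x) := by
      apply div_nonneg
      · have := pow_le_one₀ hx0.le hx1.le (n := q); linarith
      · linarith
    refine ⟨?_, mul_nonneg hgeom0 hpos.le⟩
    have hrw : ((1 - x ^ q) / (1 - x) * x ^ (-(((q : ℝ) - 1) / d))) ^ n
        = (∑ j ∈ Finset.range q, x ^ j) ^ n * (x ^ s)⁻¹ := by
      rw [mul_pow, hgeom, ← Real.rpow_natCast (x ^ (-(((q : ℝ) - 1) / d))) n,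
        ← Real.rpow_mul hx0.le, hexp]
      congr 1
      rw [show -((s : ℝ) / n) * n = -(s : ℝ) by field_simp,
        Real.rpow_neg hx0.le, Real.rpow_natCast]
    rw [hrw, ← div_eq_mul_inv, le_div_iff₀ (by positivity)]
    exact count_le_aux n s q x hx0.le hx1.le
  have hSne : S.Nonempty := by
    exact ⟨_, ⟨1/2, by norm_num, by norm_num, rfl⟩⟩
  -- c := C ^ (1/n)
  set c : ℝ := C ^ ((1 : ℝ) / n) with hc
  have hc0 : 0 ≤ c := Real.rpow_nonneg hC0 _
  have hcn : c ^ n = C := by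
    rw [hc, ← Real.rpow_natCast (C ^ ((1:ℝ)/n)) n, ← Real.rpow_mul hC0,
      one_div_mul_cancel hn0, Real.rpow_one]
  have hle : c ≤ sInf S := by
    apply le_csInf hSne
    intro y hy
    obtain ⟨h1, h2⟩ := key y hy
    have := h1.trans_eq rfl
    rw [← hcn] at h1
    exact (pow_le_pow_iff_left₀ hc0 h2 (by omega)).mp h1
  have hJ : (q : ℝ) * J q d = sInf S := by
    rw [J, ← hS]; field_simp
  calc C = c ^ n := hcn.symm
    _ ≤ (sInf S) ^ n := pow_le_pow_left₀ hc0 hle n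
    _ = ((q : ℝ) * J q d) ^ n := by rw [hJ]
end
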